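/- arXiv:2209.08086 — 6 statements merged into one kernel-verified Lean document; each statement's English description precedes it below -/
import Mathlib

section
/- Let k0 > 0 and R_s, R_t ∈ SO(3) with R_s·e3 ≠ R_t·e3 and R_s·e3 ≠ −R_t·e3, and let (φ, θ, ψ) ∈ ℝ × [0,π] × ℝ be Euler angles of the relative rotation, i.e. R_sᵀR_t = Q³(φ)·Q²(θ)·Q³(ψ). Then for all β ∈ J_{s,t}: γ_{s,t}(β) = (k0/2)·sin θ·(cos β − 1)·(cos φ, sin φ) + k0·cos(θ/2)·sin β·(−sin φ, cos φ). -/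
noncomputable section
open Real Set MeasureTheory
open scoped RealInnerProductSpace

abbrev R3 : Type := EuclideanSpace ℝ (Fin 3)
abbrev R2 : Type := EuclideanSpace ℝ (Fin 2)
abbrev Mat3 : Type := Matrix (Fin 3) (Fin 3) ℝ

def SO3 (R : Mat3) : Prop := R.transpose * R = 1 ∧ R.det = 1

def e3 : R3 := WithLp.toLp 2 (![0, 0, 1] : Fin 3 → ℝ)

def act3 (R : Mat3) (x : R3) : R3 := WithLp.toLp 2 (R.mulVec x)

def cross3 (x y : R3) : R3 := WithLp.toLp 2 (crossProduct x y)

def rotE3 (R : Mat3) : R3 := act3 R e3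

def v1 (Rs Rt : Mat3) : R3 := ‖rotE3 Rs + rotE3 Rt‖⁻¹ • (rotE3 Rs + rotE3 Rt)

def v2 (Rs Rt : Mat3) : R3 :=
  ‖cross3 (rotE3 Rs) (rotE3 Rt)‖⁻¹ • cross3 (rotE3 Rs) (rotE3 Rt)

def v3 (Rs Rt : Mat3) : R3 := ‖rotE3 Rs - rotE3 Rt‖⁻¹ • (rotE3 Rs - rotE3 Rt)

def aRad (k0 : ℝ) (Rs Rt : Mat3) : ℝ := k0 / 2 * ‖rotE3 Rs + rotE3 Rt‖

def sigmaArc (k0 : ℝ) (Rs Rt : Mat3) (β : ℝ) : R3 :=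
  (aRad k0 Rs Rt * (Real.cos β - 1)) • v1 Rs Rt + (aRad k0 Rs Rt * Real.sin β) • v2 Rs Rt

def cST (Rs Rt : Mat3) : ℝ := ⟪rotE3 Rs, rotE3 Rt⟫

def Jset (Rs Rt : Mat3) : Set ℝ :=
  if cST Rs Rt ≤ 0 then Ioc (-π) π
  else Ioo (-(Real.arccos ((cST Rs Rt - 1) / (cST Rs Rt + 1))))
    (Real.arccos ((cST Rs Rt - 1) / (cST Rs Rt + 1)))

def kappa (k0 : ℝ) (k : R2) : ℝ := Real.sqrt (k0 ^ 2 - ‖k‖ ^ 2)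

def hmap (k0 : ℝ) (k : R2) : R3 := WithLp.toLp 2 (![k 0, k 1, kappa k0 k - k0] : Fin 3 → ℝ)

def ball2 (k0 : ℝ) : Set R2 := {k | ‖k‖ < k0}

def Hemi (k0 : ℝ) (R : Mat3) : Set R3 := (fun k => act3 R (hmap k0 k)) '' ball2 k0

def P2 (x : R3) : R2 := WithLp.toLp 2 (![x 0, x 1] : Fin 2 → ℝ)

def relAxis (Rs Rt : Mat3) : R3 := act3 (Rs.transpose * Rt) e3

def w1 (Rs Rt : Mat3) : R2 := ‖P2 (relAxis Rs Rt)‖⁻¹ • P2 (relAxis Rs Rt)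

def w2 (Rs Rt : Mat3) : R2 :=
  ‖P2 (cross3 e3 (relAxis Rs Rt))‖⁻¹ • P2 (cross3 e3 (relAxis Rs Rt))

def aTilde (k0 : ℝ) (Rs Rt : Mat3) : ℝ := k0 / 2 * ‖P2 (relAxis Rs Rt)‖

def gammaArc (k0 : ℝ) (Rs Rt : Mat3) (β : ℝ) : R2 :=
  (aTilde k0 Rs Rt * (Real.cos β - 1)) • w1 Rs Rt + (aRad k0 Rs Rt * Real.sin β) • w2 Rs Rt

def Q2mat (α : ℝ) : Mat3 :=
  !![Real.cos α, 0, Real.sin α; 0, 1, 0; -Real.sin α, 0, Real.cos α]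

def Q3mat (α : ℝ) : Mat3 :=
  !![Real.cos α, -Real.sin α, 0; Real.sin α, Real.cos α, 0; 0, 0, 1]

def gammaEuler (k0 φ θ β : ℝ) : R2 :=
  (k0 / 2 * Real.sin θ * (Real.cos β - 1)) • WithLp.toLp 2 (![Real.cos φ, Real.sin φ] : Fin 2 → ℝ)
    + (k0 * Real.cos (θ / 2) * Real.sin β) • WithLp.toLp 2 (![-Real.sin φ, Real.cos φ] : Fin 2 → ℝ)


open Matrix in
lemma norm_act3_SO3 (A : Mat3) (h : A.transpose * A = 1) (v : R3) :
    ‖act3 A v‖ = ‖v‖ := by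
  have hdot : (A.mulVec v) ⬝ᵥ (A.mulVec v) = v ⬝ᵥ v := by
    rw [dotProduct_mulVec, ← Matrix.vecMul_transpose, Matrix.vecMul_vecMul, h,
      Matrix.vecMul_one]
  rw [show ‖act3 A v‖ = √(∑ i, ‖act3 A v i‖ ^ 2) from EuclideanSpace.norm_eq _,
    show ‖v‖ = √(∑ i, ‖v i‖ ^ 2) from EuclideanSpace.norm_eq _]
  congr 1
  simpa [act3, dotProduct, sq, Real.norm_eq_abs, abs_mul_abs_self] using hdot

lemma norm_R3_explicit (v : R3) : ‖v‖ = √(v 0 ^ 2 + v 1 ^ 2 + v 2 ^ 2) := by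
  rw [EuclideanSpace.norm_eq]
  simp [Fin.sum_univ_three, Real.norm_eq_abs, sq_abs, add_assoc]

lemma norm_R2_explicit (v : R2) : ‖v‖ = √(v 0 ^ 2 + v 1 ^ 2) := by
  rw [EuclideanSpace.norm_eq]
  simp [Fin.sum_univ_two, Real.norm_eq_abs, sq_abs]

set_option maxHeartbeats 2000000 in
/-- Proposition: representation of `γ_{s,t}` via the Euler angles of
`Rsᵀ Rt`. If `Rs·e3 ≠ ±Rt·e3` and `(φ, θ, ψ)` are Euler angles of `Rsᵀ Rt`, then for all
`β ∈ J_{s,t}` the elliptic arc `γ_{s,t}(β)` equals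
`(k0/2)·sin θ·(cos β − 1)·(cos φ, sin φ) + k0·cos(θ/2)·sin β·(−sin φ, cos φ)`. -/
theorem ellipticArc_euler (k0 : ℝ) (hk0 : 0 < k0) (Rs Rt : Mat3)
    (hRs : SO3 Rs) (hRt : SO3 Rt)
    (hne : rotE3 Rs ≠ rotE3 Rt) (hne' : rotE3 Rs ≠ -rotE3 Rt)
    (φ θ ψ : ℝ) (hθ : θ ∈ Icc 0 π)
    (heuler : Rs.transpose * Rt = Q3mat φ * Q2mat θ * Q3mat ψ) :
    ∀ β ∈ Jset Rs Rt, gammaArc k0 Rs Rt β = gammaEuler k0 φ θ β := by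
  intro β _hβ
  obtain ⟨hRs1, _⟩ := hRs
  have hs0 := hθ.1
  have hsπ := hθ.2
  -- explicit form of the relative axis
  have hrel : relAxis Rs Rt
      = (WithLp.toLp 2 (![Real.sin θ * Real.cos φ, Real.sin θ * Real.sin φ, Real.cos θ] : Fin 3 → ℝ) : R3) := by
    unfold relAxis act3 e3
    rw [heuler]
    ext i
    fin_cases i <;>
      simp [Q2mat, Q3mat, Matrix.mulVec, Matrix.mul_apply, Fin.sum_univ_three,
        dotProduct] <;> ring
  -- Rt acts as Rs composed with the relative axis
  have hRsRt : Rs * Rs.transpose = 1 := mul_eq_one_comm.mp hRs1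
  have hRt3 : rotE3 Rt = act3 Rs (relAxis Rs Rt) := by
    unfold rotE3 relAxis act3
    rw [Matrix.mulVec_mulVec, ← Matrix.mul_assoc, hRsRt, Matrix.one_mul]
  -- θ is not 0
  have hθ0 : θ ≠ 0 := by
    intro h0
    apply hne
    rw [hRt3, hrel, h0]
    simp [rotE3, e3]
  have hθπ : θ ≠ π := by
    intro hπ
    apply hne'
    have : relAxis Rs Rt = -e3 := by
      rw [hrel, hπ]
      ext i
      fin_cases i <;> simp [e3]
    rw [hRt3, this]
    unfold rotE3 act3
    rw [WithLp.ofLp_neg, Matrix.mulVec_neg, WithLp.toLp_neg, neg_neg]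
  have hsθ : 0 < Real.sin θ :=
    Real.sin_pos_of_pos_of_lt_pi (lt_of_le_of_ne hs0 (Ne.symm hθ0)) (lt_of_le_of_ne hsπ hθπ)
  -- half-angle cosine nonneg
  have hcθ2 : 0 ≤ Real.cos (θ / 2) := by
    apply Real.cos_nonneg_of_mem_Icc
    constructor <;> [linarith [Real.pi_pos]; linarith]
  -- P2 of the relative axis
  have hP2rel : P2 (relAxis Rs Rt)
      = (WithLp.toLp 2 (![Real.sin θ * Real.cos φ, Real.sin θ * Real.sin φ] : Fin 2 → ℝ) : R2) := by
    rw [hrel]; unfold P2; simp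
  have hnormP2 : ‖P2 (relAxis Rs Rt)‖ = Real.sin θ := by
    rw [norm_R2_explicit, hP2rel]
    rw [show (WithLp.toLp 2 (![Real.sin θ * Real.cos φ, Real.sin θ * Real.sin φ] : Fin 2 → ℝ) : R2) 0 ^ 2
        + (WithLp.toLp 2 (![Real.sin θ * Real.cos φ, Real.sin θ * Real.sin φ] : Fin 2 → ℝ) : R2) 1 ^ 2
        = Real.sin θ ^ 2 by
      have := Real.sin_sq_add_cos_sq φ
      simp only [Matrix.cons_val_zero, Matrix.cons_val_one, Matrix.head_cons]
      nlinarith []]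
    exact Real.sqrt_sq hsθ.le
  -- w1
  have hw1 : w1 Rs Rt = (WithLp.toLp 2 (![Real.cos φ, Real.sin φ] : Fin 2 → ℝ) : R2) := by
    unfold w1
    rw [hnormP2, hP2rel]
    ext i
    fin_cases i <;>
      simp [PiLp.smul_apply, smul_eq_mul] <;> field_simp
  -- cross product e3 × relAxis
  have hcross : cross3 e3 (relAxis Rs Rt)
      = (WithLp.toLp 2 (![-(Real.sin θ * Real.sin φ), Real.sin θ * Real.cos φ, 0] : Fin 3 → ℝ) : R3) := by
    unfold cross3
    rw [hrel]
    ext i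
    fin_cases i <;> simp [e3, cross_apply]
  have hP2cross : P2 (cross3 e3 (relAxis Rs Rt))
      = (WithLp.toLp 2 (![-(Real.sin θ * Real.sin φ), Real.sin θ * Real.cos φ] : Fin 2 → ℝ) : R2) := by
    rw [hcross]; unfold P2; simp
  have hnormP2c : ‖P2 (cross3 e3 (relAxis Rs Rt))‖ = Real.sin θ := by
    rw [norm_R2_explicit, hP2cross]
    rw [show (WithLp.toLp 2 (![-(Real.sin θ * Real.sin φ), Real.sin θ * Real.cos φ] : Fin 2 → ℝ) : R2) 0 ^ 2
        + (WithLp.toLp 2 (![-(Real.sin θ * Real.sin φ), Real.sin θ * Real.cos φ] : Fin 2 → ℝ) : R2) 1 ^ 2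
        = Real.sin θ ^ 2 by
      have := Real.sin_sq_add_cos_sq φ
      simp only [Matrix.cons_val_zero, Matrix.cons_val_one, Matrix.head_cons]
      nlinarith []]
    exact Real.sqrt_sq hsθ.le
  have hw2 : w2 Rs Rt = (WithLp.toLp 2 (![-(Real.sin φ), Real.cos φ] : Fin 2 → ℝ) : R2) := by
    unfold w2
    rw [hnormP2c, hP2cross]
    ext i
    fin_cases i <;>
      simp [PiLp.smul_apply, smul_eq_mul] <;> field_simp
  -- aTilde
  have haT : aTilde k0 Rs Rt = k0 / 2 * Real.sin θ := by
    unfold aTilde; rw [hnormP2]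
  -- aRad
  have hsum : rotE3 Rs + rotE3 Rt = act3 Rs
      (WithLp.toLp 2 (![Real.sin θ * Real.cos φ, Real.sin θ * Real.sin φ, 1 + Real.cos θ] : Fin 3 → ℝ) : R3) := by
    rw [hRt3, hrel]
    show WithLp.toLp 2 (Rs.mulVec e3) + WithLp.toLp 2 (Rs.mulVec _) = WithLp.toLp 2 (Rs.mulVec _)
    rw [← WithLp.toLp_add, ← Matrix.mulVec_add]
    congr 2
    ext i
    fin_cases i <;> simp [e3]
  have haR : aRad k0 Rs Rt = k0 * Real.cos (θ / 2) := by
    unfold aRad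
    rw [hsum, norm_act3_SO3 Rs hRs1, norm_R3_explicit]
    have hc2 : Real.cos θ = 2 * Real.cos (θ / 2) ^ 2 - 1 := by
      have := Real.cos_sq (θ / 2)
      rw [show 2 * (θ / 2) = θ by ring] at this
      nlinarith []
    simp only [Matrix.cons_val_zero, Matrix.cons_val_one, Matrix.head_cons,
      Matrix.cons_val_two, Matrix.tail_cons]
    rw [show (Real.sin θ * Real.cos φ) ^ 2 + (Real.sin θ * Real.sin φ) ^ 2
          + (1 + Real.cos θ) ^ 2 = (2 * Real.cos (θ / 2)) ^ 2 by
      have h1 := Real.sin_sq_add_cos_sq φ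
      have h2 := Real.sin_sq_add_cos_sq θ
      nlinarith []]
    rw [Real.sqrt_sq (by linarith)]
    ring
  -- conclude
  unfold gammaArc gammaEuler
  rw [hw1, hw2, haT, haR]
end
end

section
/- Let k0 > 0, let f : ℝ³ → ℝ be integrable, and let R_s, R_t ∈ SO(3) with R_s·e3 = R_t·e3. Then there exists α ∈ ℝ such that R_sᵀR_t = Q³(α), and for any such α one has ν_{R_s}(Q(α)·k) = ν_{R_t}(k) for all k ∈ B. -/
noncomputable section
open Real Set MeasureTheory
open scoped RealInnerProductSpace

/-- The 3D Fourier transform `𝓕f(y) = (2π)^{−3/2} ∫ f(x) e^{−i⟨x,y⟩} dx`. -/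
def FT (f : R3 → ℝ) (y : R3) : ℂ :=
  ((2 * π : ℝ) ^ (-(3 : ℝ) / 2) : ℝ) *
    ∫ x : R3, (f x : ℂ) * Complex.exp (-Complex.I * (⟪x, y⟫ : ℝ))

/-- The scaled squared energy `ν_R(k) = |𝓕f(R·h(k))|²`. -/
def nu (k0 : ℝ) (f : R3 → ℝ) (R : Mat3) (k : R2) : ℝ :=
  ‖FT f (act3 R (hmap k0 k))‖ ^ 2

def rot2 (α : ℝ) : Matrix (Fin 2) (Fin 2) ℝ :=
  !![Real.cos α, -Real.sin α; Real.sin α, Real.cos α]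

def act2 (Q : Matrix (Fin 2) (Fin 2) ℝ) (k : R2) : R2 := WithLp.toLp 2 (Q.mulVec k)


lemma exists_cos_sin {a c : ℝ} (h : a ^ 2 + c ^ 2 = 1) :
    ∃ α : ℝ, Real.cos α = a ∧ Real.sin α = c := by
  have ha1 : -1 ≤ a := by nlinarith
  have ha2 : a ≤ 1 := by nlinarith
  refine ⟨if 0 ≤ c then Real.arccos a else -Real.arccos a, ?_, ?_⟩ <;>
    rcases le_or_gt 0 c with hc | hc
  · simp [hc, Real.cos_arccos ha1 ha2]
  · simp [not_le.mpr hc, Real.cos_arccos ha1 ha2]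
  · rw [if_pos hc, Real.sin_arccos]
    rw [show (1 : ℝ) - a ^ 2 = c ^ 2 by linarith, Real.sqrt_sq hc]
  · rw [if_neg (not_le.mpr hc), Real.sin_neg, Real.sin_arccos]
    rw [show (1 : ℝ) - a ^ 2 = c ^ 2 by linarith, Real.sqrt_sq_eq_abs,
      abs_of_neg hc]
    ring

lemma fix_e3_eq_Q3 {M : Mat3} (hM : SO3 M) (hfix : M.mulVec e3 = e3) :
    ∃ α : ℝ, M = Q3mat α := by
  have h02 : M 0 2 = 0 := by
    have := congrFun hfix 0
    simpa [Matrix.mulVec, dotProduct, e3, Fin.sum_univ_three] using this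
  have h12 : M 1 2 = 0 := by
    have := congrFun hfix 1
    simpa [Matrix.mulVec, dotProduct, e3, Fin.sum_univ_three] using this
  have h22 : M 2 2 = 1 := by
    have := congrFun hfix 2
    simpa [Matrix.mulVec, dotProduct, e3, Fin.sum_univ_three] using this
  have hMMt : M * M.transpose = 1 := mul_eq_one_comm.mp hM.1
  have hrow2 : M 2 0 ^ 2 + M 2 1 ^ 2 + M 2 2 ^ 2 = 1 := by
    have := congrFun (congrFun hMMt 2) 2
    simpa [Matrix.mul_apply, Matrix.transpose_apply, Fin.sum_univ_three,
      Matrix.one_apply, sq] using this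
  have h20 : M 2 0 = 0 := by nlinarith [sq_nonneg (M 2 0), sq_nonneg (M 2 1)]
  have h21 : M 2 1 = 0 := by nlinarith [sq_nonneg (M 2 0), sq_nonneg (M 2 1)]
  have hcol0 : M 0 0 ^ 2 + M 1 0 ^ 2 + M 2 0 ^ 2 = 1 := by
    have := congrFun (congrFun hM.1 0) 0
    simpa [Matrix.mul_apply, Matrix.transpose_apply, Fin.sum_univ_three,
      Matrix.one_apply, sq] using this
  have hcol01 : M 0 0 * M 0 1 + M 1 0 * M 1 1 + M 2 0 * M 2 1 = 0 := by
    have := congrFun (congrFun hM.1 0) 1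
    simpa [Matrix.mul_apply, Matrix.transpose_apply, Fin.sum_univ_three,
      Matrix.one_apply] using this
  have hdet : M 0 0 * M 1 1 - M 0 1 * M 1 0 = 1 := by
    have := hM.2
    rw [Matrix.det_fin_three] at this
    rw [h02, h12, h20, h21, h22] at this
    linarith
  have hac : M 0 0 ^ 2 + M 1 0 ^ 2 = 1 := by rw [h20] at hcol0; nlinarith
  obtain ⟨α, hcos, hsin⟩ := exists_cos_sin hac
  have hb : M 0 1 = -M 1 0 := by
    linear_combination -(M 0 1 * hac) - M 1 0 * hdet + M 0 0 * hcol01 -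
      (M 0 0 * M 2 1) * h20
  have hd : M 1 1 = M 0 0 := by
    linear_combination -(M 1 1 * hac) + M 0 0 * hdet + M 1 0 * hcol01 -
      (M 1 0 * M 2 1) * h20
  refine ⟨α, ?_⟩
  ext i j
  fin_cases i <;> fin_cases j <;>
    simp [Q3mat, hcos, hsin, h02, h12, h20, h21, h22, hb, hd]

lemma norm_sq_R2 (x : R2) : ‖x‖ ^ 2 = x 0 ^ 2 + x 1 ^ 2 := by
  rw [EuclideanSpace.norm_eq, Real.sq_sqrt (by positivity)]
  simp [Fin.sum_univ_two, sq_abs, Real.norm_eq_abs]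

lemma hmap_rot (k0 α : ℝ) (k : R2) :
    hmap k0 (act2 (rot2 α) k) = act3 (Q3mat α) (hmap k0 k) := by
  have hn : ‖act2 (rot2 α) k‖ ^ 2 = ‖k‖ ^ 2 := by
    rw [norm_sq_R2, norm_sq_R2]
    have h0 : act2 (rot2 α) k 0 = Real.cos α * k 0 - Real.sin α * k 1 := by
      simp [act2, rot2, Matrix.mulVec, dotProduct, Fin.sum_univ_two]
      ring
    have h1 : act2 (rot2 α) k 1 = Real.sin α * k 0 + Real.cos α * k 1 := by
      simp [act2, rot2, Matrix.mulVec, dotProduct, Fin.sum_univ_two]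
    rw [h0, h1]
    nlinarith [Real.sin_sq_add_cos_sq α]
  have hk : kappa k0 (act2 (rot2 α) k) = kappa k0 k := by
    unfold kappa; rw [hn]
  ext j
  fin_cases j
  · simp [hmap, act2, act3, rot2, Q3mat, Matrix.mulVec, dotProduct,
      Fin.sum_univ_two, Fin.sum_univ_three]
    ring
  · simp [hmap, act2, act3, rot2, Q3mat, Matrix.mulVec, dotProduct,
      Fin.sum_univ_two, Fin.sum_univ_three]
    ring
  · simp [hmap, act3, Q3mat, Matrix.mulVec, dotProduct,
      Fin.sum_univ_three, hk]

/-- Proposition: special case `Rs·e3 = Rt·e3`.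
There exists `α` with `Rsᵀ Rt = Q³(α)`, and for any such `α`,
`ν_{Rs}(Q(α)·k) = ν_{Rt}(k)` for all `k ∈ B`. -/
theorem special_case_plus (k0 : ℝ) (hk0 : 0 < k0) (f : R3 → ℝ)
    (hf : MeasureTheory.Integrable f) (Rs Rt : Mat3) (hRs : SO3 Rs) (hRt : SO3 Rt)
    (heq : rotE3 Rs = rotE3 Rt) :
    (∃ α : ℝ, Rs.transpose * Rt = Q3mat α) ∧
    (∀ α : ℝ, Rs.transpose * Rt = Q3mat α →
      ∀ k ∈ ball2 k0, nu k0 f Rs (act2 (rot2 α) k) = nu k0 f Rt k) := by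
  constructor
  · have hSO : SO3 (Rs.transpose * Rt) := by
      constructor
      · have h1 : Rs * Rs.transpose = 1 := mul_eq_one_comm.mp hRs.1
        calc (Rs.transpose * Rt).transpose * (Rs.transpose * Rt)
            = Rt.transpose * (Rs * Rs.transpose) * Rt := by
              simp [Matrix.transpose_mul, Matrix.mul_assoc]
          _ = 1 := by rw [h1]; simpa [Matrix.mul_assoc] using hRt.1
      · have : Rs.det = 1 ∨ Rs.det = -1 := by
          have h := congrArg Matrix.det hRs.1
          simp [Matrix.det_mul, Matrix.det_transpose] at h
          rcases mul_self_eq_one_iff.mp (by nlinarith [h] : Rs.det * Rs.det = 1) with h' | h'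
          · exact Or.inl h'
          · exact Or.inr h'
        rw [Matrix.det_mul, Matrix.det_transpose, hRs.2, hRt.2]; norm_num
    have hfix : (Rs.transpose * Rt).mulVec e3 = e3 := by
      have h1 : Rt.mulVec e3 = Rs.mulVec e3 := by
        have := congrArg WithLp.ofLp heq.symm; simpa [rotE3, act3] using this
      rw [← Matrix.mulVec_mulVec, h1, Matrix.mulVec_mulVec, hRs.1]
      simp
    exact fix_e3_eq_Q3 hSO hfix
  · intro α hα k _
    have hRteq : Rt = Rs * Q3mat α := by
      have h1 : Rs * Rs.transpose = 1 := mul_eq_one_comm.mp hRs.1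
      calc Rt = (Rs * Rs.transpose) * Rt := by rw [h1, Matrix.one_mul]
        _ = Rs * (Rs.transpose * Rt) := by rw [Matrix.mul_assoc]
        _ = Rs * Q3mat α := by rw [hα]
    have key : act3 Rs (hmap k0 (act2 (rot2 α) k)) = act3 Rt (hmap k0 k) := by
      rw [hmap_rot, hRteq]
      simp [act3, Matrix.mulVec_mulVec]
    unfold nu
    rw [key]
end
end

section
/- Let k0 > 0, let f : ℝ³ → ℝ be integrable, and let R_s, R_t ∈ SO(3) with R_s·e3 = −R_t·e3. Then there exists α ∈ ℝ such that R_sᵀR_t = Q²(π)·Q³(α), and for any such α one has ν_{R_s}(S·Q(α)·k) = ν_{R_t}(k) for all k ∈ B, where S = diag(1, −1). -/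
set_option maxHeartbeats 1000000


noncomputable section
open Real Set MeasureTheory
open scoped RealInnerProductSpace

def Smat : Matrix (Fin 2) (Fin 2) ℝ := !![1, 0; 0, -1]

lemma friedel (f : R3 → ℝ) (y : R3) : ‖FT f (-y)‖ = ‖FT f y‖ := by
  have hfun : ∀ x : R3, ((f x : ℂ) * Complex.exp (-Complex.I * ((⟪x, -y⟫ : ℝ) : ℂ)))
      = (starRingEnd ℂ) ((f x : ℂ) * Complex.exp (-Complex.I * ((⟪x, y⟫ : ℝ) : ℂ))) := by
    intro x
    rw [map_mul, Complex.conj_ofReal, ← Complex.exp_conj]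
    congr 1
    simp only [inner_neg_right, map_mul, map_neg, Complex.conj_I, Complex.conj_ofReal,
      Complex.ofReal_neg]
    ring
  have h : FT f (-y) = (starRingEnd ℂ) (FT f y) := by
    unfold FT
    rw [map_mul, Complex.conj_ofReal, ← integral_conj]
    simp only [hfun]
  rw [h, Complex.norm_conj]

lemma Q2Q3pi (α : ℝ) : Q2mat π * Q3mat α =
    !![-Real.cos α, Real.sin α, 0; Real.sin α, Real.cos α, 0; 0, 0, -1] := by
  rw [Q2mat, Q3mat]
  ext i j
  fin_cases i <;> fin_cases j <;>
    simp [Matrix.mul_apply, Fin.sum_univ_three, Real.cos_pi, Real.sin_pi]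

lemma SQ (α : ℝ) : Smat * rot2 α =
    !![Real.cos α, -Real.sin α; -Real.sin α, -Real.cos α] := by
  rw [Smat, rot2]
  ext i j
  fin_cases i <;> fin_cases j <;>
    simp [Matrix.mul_apply, Fin.sum_univ_two]

/-- Proposition: special case `Rs·e3 = −Rt·e3`.
There exists `α` with `Rsᵀ Rt = Q²(π)·Q³(α)`, and for any such `α`,
`ν_{Rs}(S·Q(α)·k) = ν_{Rt}(k)` for all `k ∈ B`, where `S = diag(1, −1)`. -/
theorem special_case_minus (k0 : ℝ) (hk0 : 0 < k0) (f : R3 → ℝ)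
    (hf : MeasureTheory.Integrable f) (Rs Rt : Mat3) (hRs : SO3 Rs) (hRt : SO3 Rt)
    (heq : rotE3 Rs = -rotE3 Rt) :
    (∃ α : ℝ, Rs.transpose * Rt = Q2mat π * Q3mat α) ∧
    (∀ α : ℝ, Rs.transpose * Rt = Q2mat π * Q3mat α →
      ∀ k ∈ ball2 k0, nu k0 f Rs (act2 (Smat * rot2 α) k) = nu k0 f Rt k) := by
  have hRs' : Rs * Rs.transpose = 1 := mul_eq_one_comm.mp hRs.1
  have hRt' : Rt * Rt.transpose = 1 := mul_eq_one_comm.mp hRt.1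
  set A : Mat3 := Rs.transpose * Rt with hAdef
  constructor
  · -- existence of α
    have hAo : A.transpose * A = 1 := by
      rw [hAdef, Matrix.transpose_mul, Matrix.transpose_transpose,
        Matrix.mul_assoc, ← Matrix.mul_assoc Rs, hRs', Matrix.one_mul, hRt.1]
    have hAo' : A * A.transpose = 1 := mul_eq_one_comm.mp hAo
    have hdet : A.det = 1 := by
      rw [hAdef, Matrix.det_mul, Matrix.det_transpose, hRs.2, hRt.2, one_mul]
    have hAe3 : A.mulVec (fun i => e3 i) = fun i => (-(e3 : Fin 3 → ℝ)) i := by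
      have h1 : Rs.transpose.mulVec (Rs.mulVec (fun i => e3 i)) = fun i => e3 i := by
        rw [Matrix.mulVec_mulVec, hRs.1, Matrix.one_mulVec]
      have h2 : Rs.mulVec (fun i => e3 i) = -(Rt.mulVec (fun i => e3 i)) := by
        have := heq
        simp only [rotE3, act3] at this
        funext i
        have := congrArg (fun v : R3 => v i) this
        simpa using this
      rw [hAdef, ← Matrix.mulVec_mulVec]
      rw [show Rt.mulVec (fun i => e3 i) = -(Rs.mulVec (fun i => e3 i)) by
        rw [h2]; simp]
      rw [Matrix.mulVec_neg, h1]
    -- extract entries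
    have e02 : A 0 2 = 0 := by
      have := congrFun hAe3 0
      simpa [Matrix.mulVec, dotProduct, Fin.sum_univ_three, e3] using this
    have e12 : A 1 2 = 0 := by
      have := congrFun hAe3 1
      simpa [Matrix.mulVec, dotProduct, Fin.sum_univ_three, e3] using this
    have e22 : A 2 2 = -1 := by
      have := congrFun hAe3 2
      simpa [Matrix.mulVec, dotProduct, Fin.sum_univ_three, e3] using this
    have row2 : A 2 0 ^ 2 + A 2 1 ^ 2 + A 2 2 ^ 2 = 1 := by
      have := congrFun (congrFun hAo' 2) 2
      simp [Matrix.mul_apply, Fin.sum_univ_three, Matrix.transpose_apply,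
        Matrix.one_apply] at this
      nlinarith [this]
    have e20 : A 2 0 = 0 := by nlinarith [sq_nonneg (A 2 0), sq_nonneg (A 2 1)]
    have e21 : A 2 1 = 0 := by nlinarith [sq_nonneg (A 2 0), sq_nonneg (A 2 1)]
    have hab2 : A 0 0 ^ 2 + A 0 1 ^ 2 = 1 := by
      have := congrFun (congrFun hAo' 0) 0
      simp [Matrix.mul_apply, Fin.sum_univ_three, Matrix.transpose_apply,
        Matrix.one_apply, e02] at this
      nlinarith [this]
    have hacbd : A 0 0 * A 1 0 + A 0 1 * A 1 1 = 0 := by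
      have := congrFun (congrFun hAo' 0) 1
      simp [Matrix.mul_apply, Fin.sum_univ_three, Matrix.transpose_apply,
        Matrix.one_apply, e02, e12] at this
      linarith [this]
    have hdet' : A 0 0 * A 1 1 - A 0 1 * A 1 0 = -1 := by
      have := hdet
      rw [Matrix.det_fin_three] at this
      rw [e02, e12, e20, e21, e22] at this
      ring_nf at this ⊢
      linarith [this]
    have hc : A 1 0 = A 0 1 := by
      linear_combination (-(A 1 0)) * hab2 + A 0 0 * hacbd + (-(A 0 1)) * hdet'
    have hd : A 1 1 = -(A 0 0) := by
      linear_combination (-(A 1 1)) * hab2 + A 0 1 * hacbd + A 0 0 * hdet'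
    have habs : |A 0 0| ≤ 1 :=
      abs_le_one_iff_mul_self_le_one.mpr (by nlinarith [sq_nonneg (A 0 1)])
    have ha1 : -1 ≤ -(A 0 0) := by cases abs_le.mp habs with | intro h1 h2 => linarith
    have ha2 : -(A 0 0) ≤ 1 := by cases abs_le.mp habs with | intro h1 h2 => linarith
    set α := if 0 ≤ A 0 1 then Real.arccos (-(A 0 0)) else -Real.arccos (-(A 0 0)) with hα
    have hcos : Real.cos α = -(A 0 0) := by
      rw [hα]; split <;> simp [Real.cos_arccos ha1 ha2]
    have hsin : Real.sin α = A 0 1 := by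
      rw [hα]; split_ifs with hb
      · rw [Real.sin_arccos]
        rw [show 1 - (-(A 0 0)) ^ 2 = A 0 1 ^ 2 by nlinarith [hab2]]
        exact Real.sqrt_sq hb
      · rw [Real.sin_neg, Real.sin_arccos]
        rw [show 1 - (-(A 0 0)) ^ 2 = A 0 1 ^ 2 by nlinarith [hab2]]
        rw [Real.sqrt_sq_eq_abs, abs_of_neg (lt_of_not_ge hb)]; ring
    refine ⟨α, ?_⟩
    rw [Q2Q3pi]
    ext i j
    fin_cases i <;> fin_cases j <;>
      simp [hcos, hsin, e02, e12, e20, e21, e22, hc, hd]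
  · -- main equality
    intro α hA k _hk
    set k' := act2 (Smat * rot2 α) k with hk'
    have hk'0 : k' 0 = Real.cos α * k 0 - Real.sin α * k 1 := by
      rw [hk', act2, SQ]
      simp [Matrix.mulVec, dotProduct, Fin.sum_univ_two]
      ring
    have hk'1 : k' 1 = -(Real.sin α) * k 0 - Real.cos α * k 1 := by
      rw [hk', act2, SQ]
      simp [Matrix.mulVec, dotProduct, Fin.sum_univ_two]
      ring
    have hnorm : ‖k'‖ ^ 2 = ‖k‖ ^ 2 := by
      rw [EuclideanSpace.norm_eq, EuclideanSpace.norm_eq,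
        Real.sq_sqrt (by positivity), Real.sq_sqrt (by positivity)]
      simp [Fin.sum_univ_two, hk'0, hk'1]
      nlinarith [Real.sin_sq_add_cos_sq α]
    have hkap : kappa k0 k' = kappa k0 k := by rw [kappa, kappa, hnorm]
    have hvec : (fun i => hmap k0 k' i) =
        -((Q2mat π * Q3mat α).mulVec (fun i => hmap k0 k i)) := by
      rw [Q2Q3pi]
      funext i
      fin_cases i <;>
        simp [Matrix.mulVec, dotProduct, Fin.sum_univ_three, hmap, hk'0, hk'1, hkap] <;>
        ring
    have hmain : act3 Rs (hmap k0 k') = -(act3 Rt (hmap k0 k)) := by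
      unfold act3; rw [← WithLp.toLp_neg]; congr 1
      show Rs.mulVec (fun i => hmap k0 k' i) = -(Rt.mulVec (fun i => hmap k0 k i))
      rw [hvec, ← hA, Matrix.mulVec_neg, Matrix.mulVec_mulVec, ← Matrix.mul_assoc,
        hRs', Matrix.one_mul]
    rw [nu, nu, hmain, friedel]
end
end

section
/- Let k0 > 0, let f : ℝ³ → ℝ be integrable with compact support, and let R : ℝ → SO(3) be continuously differentiable with angular velocity ω_t = (ρ_t·φ_{t,1}, ρ_t·φ_{t,2}, ζ_t) in cylindrical coordinates. Then for every t ∈ ℝ and every r ∈ (−k0, k0): ∂_t ν_t(r·φ_t) = (ρ_t·(k0 − √(k0² − r²)) + r·ζ_t) · ⟨∇ν_t(r·φ_t), (−φ_{t,2}, φ_{t,1})⟩, where ∂_t ν_t(k) denotes the derivative of s ↦ ν_s(k) at s = t (with k fixed) and ∇ν_t(k) the gradient of ν_t with respect to k ∈ B. -/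
noncomputable section
open Real Set MeasureTheory
open scoped RealInnerProductSpace

/-- The half unit circle `S¹₊ = {(cos α, sin α) : α ∈ [0, π)}`. -/
def S1plus : Set R2 :=
  {v | ∃ α : ℝ, 0 ≤ α ∧ α < π ∧ v = (![Real.cos α, Real.sin α] : Fin 2 → ℝ)}

/-- Rotation of a planar vector by 90 degrees: `(φ₁, φ₂) ↦ (−φ₂, φ₁)`. -/
def rot90 (v : R2) : R2 := WithLp.toLp 2 (![-(v 1), v 0] : Fin 2 → ℝ)

open FourierTransform in
lemma FT_eq_aux (f : R3 → ℝ) (y : R3) :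
    FT f y = (((2 * π : ℝ) ^ (-(3 : ℝ) / 2) : ℝ) : ℂ) *
      𝓕 (fun x => (f x : ℂ)) ((2 * π)⁻¹ • y) := by
  rw [FT, Real.fourier_eq']
  congr 1
  refine integral_congr_ae (Filter.Eventually.of_forall fun v => ?_)
  have h1 : ⟪v, (2 * π)⁻¹ • y⟫ = (2 * π)⁻¹ * ⟪v, y⟫ := real_inner_smul_right _ _ _
  have h2 : (-2 * π * ((2 * π)⁻¹ * ⟪v, y⟫)) = -⟪v, y⟫ := by
    field_simp
  simp only [h1, h2, smul_eq_mul]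
  rw [mul_comm]
  congr 1
  push_cast
  ring

open FourierTransform in
lemma FT_diff_aux (f : R3 → ℝ) (hf : Integrable f) (hsupp : HasCompactSupport f) :
    Differentiable ℝ (FT f) := by
  obtain ⟨C, hC⟩ := hsupp.isCompact.isBounded.subset_closedBall 0
  set g : R3 → ℂ := fun x => (f x : ℂ) with hg
  have hgi : Integrable g := hf.ofReal
  have hgi' : Integrable (fun v : R3 => ‖v‖ * ‖g v‖) := by
    refine (hf.norm.const_mul (max C 0)).mono ?_ ?_
    · exact (continuous_norm.aestronglyMeasurable.mul
        ((Complex.continuous_ofReal.comp_aestronglyMeasurable hf.aestronglyMeasurable).norm))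
    · filter_upwards with v
      rw [Real.norm_eq_abs (max C 0 * ‖f v‖), abs_of_nonneg (by positivity)]
      simp only [norm_mul, norm_norm, hg, Complex.norm_real]
      rcases eq_or_ne (f v) 0 with h | h
      · simp [h]
      · have hv : v ∈ tsupport f := subset_tsupport f h
        have hvC := hC hv
        rw [Metric.mem_closedBall, dist_zero_right] at hvC
        exact mul_le_mul_of_nonneg_right (hvC.trans (le_max_left _ _)) (norm_nonneg _)
  have hd : Differentiable ℝ (𝓕 g) := Real.differentiable_fourier hgi hgi'
  have hFT : FT f = fun y => (((2 * π : ℝ) ^ (-(3 : ℝ) / 2) : ℝ) : ℂ) *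
      𝓕 g ((2 * π)⁻¹ • y) := funext fun y => FT_eq_aux f y
  rw [hFT]
  exact (hd.comp (differentiable_id.const_smul ((2 * π)⁻¹))).const_mul _

lemma F_diff_aux (f : R3 → ℝ) (hf : Integrable f) (hsupp : HasCompactSupport f) :
    Differentiable ℝ (fun y => ‖FT f y‖ ^ 2) := by
  have h : (fun y => ‖FT f y‖ ^ 2)
      = fun y => (FT f y).re * (FT f y).re + (FT f y).im * (FT f y).im := by
    funext y; rw [Complex.sq_norm, Complex.normSq_apply]
  rw [h]
  have hd := FT_diff_aux f hf hsupp
  have hre : Differentiable ℝ (fun y => (FT f y).re) :=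
    Complex.reCLM.differentiable.comp hd
  have him : Differentiable ℝ (fun y => (FT f y).im) :=
    Complex.imCLM.differentiable.comp hd
  exact (hre.mul hre).add (him.mul him)

lemma r2_norm_sq_aux (k : R2) : ‖k‖ ^ 2 = k 0 ^ 2 + k 1 ^ 2 := by
  rw [EuclideanSpace.norm_eq, Real.sq_sqrt (by positivity)]
  simp [Fin.sum_univ_two, Real.norm_eq_abs, sq_abs]
/-- Lemma: infinitesimal common circle relation.
Let `R : ℝ → SO(3)` be continuously differentiable (with derivative `R'`), with angular
velocity `ω_t` (defined by `R_tᵀ R_t′ y = ω_t × y`) written in cylindrical coordinates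
`ω_t = (ρ_t φ_{t,1}, ρ_t φ_{t,2}, ζ_t)`, `φ_t ∈ S¹₊`.  Then for every `t` and every
`r ∈ (−k0, k0)`,
`∂_t ν_t(r φ_t) = (ρ_t (k0 − √(k0² − r²)) + r ζ_t) ⟨∇ν_t(r φ_t), (−φ_{t,2}, φ_{t,1})⟩`. -/
theorem infinitesimal_common_circle (k0 : ℝ) (hk0 : 0 < k0) (f : R3 → ℝ)
    (hf : MeasureTheory.Integrable f) (hsupp : HasCompactSupport f)
    (R R' : ℝ → Mat3) (hSO : ∀ t, SO3 (R t))
    (hderiv : ∀ t i j, HasDerivAt (fun s => R s i j) (R' t i j) t)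
    (hcont : ∀ i j, Continuous fun t => R' t i j)
    (ω : ℝ → R3)
    (hω : ∀ t (y : R3), act3 ((R t).transpose * R' t) y = cross3 (ω t) y)
    (ρ ζ : ℝ → ℝ) (φ : ℝ → R2) (hφ : ∀ t, φ t ∈ S1plus)
    (hcyl : ∀ t, ω t = (![ρ t * φ t 0, ρ t * φ t 1, ζ t] : Fin 3 → ℝ)) :
    ∀ (t : ℝ), ∀ r ∈ Ioo (-k0) k0,
      deriv (fun s => nu k0 f (R s) (r • φ t)) t
        = (ρ t * (k0 - Real.sqrt (k0 ^ 2 - r ^ 2)) + r * ζ t)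
            * ⟪gradient (nu k0 f (R t)) (r • φ t), rot90 (φ t)⟫ := by
  --

  intro t r hr
  -- facts about φ
  obtain ⟨α, -, -, hφα⟩ := hφ t
  have hφ0 : φ t 0 = Real.cos α := by rw [hφα]; rfl
  have hφ1 : φ t 1 = Real.sin α := by rw [hφα]; rfl
  have hφsq : φ t 0 ^ 2 + φ t 1 ^ 2 = 1 := by
    rw [hφ0, hφ1, add_comm]; exact Real.sin_sq_add_cos_sq α
  set kpt : R2 := r • φ t with hkpt
  have hkpt0 : kpt 0 = r * φ t 0 := rfl
  have hkpt1 : kpt 1 = r * φ t 1 := rfl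
  have hrsq : 0 < k0 ^ 2 - r ^ 2 := by
    have h1 : |r| < k0 := abs_lt.2 ⟨hr.1, hr.2⟩
    nlinarith [abs_nonneg r, sq_abs r]
  set κr := Real.sqrt (k0 ^ 2 - r ^ 2) with hκrdef
  have hκrpos : 0 < κr := Real.sqrt_pos.2 hrsq
  have hkptsq : kpt 0 ^ 2 + kpt 1 ^ 2 = r ^ 2 := by
    rw [hkpt0, hkpt1, mul_pow, mul_pow, ← mul_add, hφsq, mul_one]
  have hkappa : kappa k0 kpt = κr := by
    rw [kappa, r2_norm_sq_aux, hkptsq]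
  set h0 : R3 := hmap k0 kpt with hh0
  set c : ℝ := ρ t * (k0 - κr) + r * ζ t with hc
  set F : R3 → ℝ := fun y => ‖FT f y‖ ^ 2 with hF
  have hFd : Differentiable ℝ F := F_diff_aux f hf hsupp
  set y0 : R3 := act3 (R t) h0 with hy0
  set LF := fderiv ℝ F y0 with hLF
  -- derivative of the curve s ↦ R_s · h0
  have hR : HasDerivAt (fun s => (show Fin 3 → Fin 3 → ℝ from R s))
      (show Fin 3 → Fin 3 → ℝ from R' t) t := by
    rw [hasDerivAt_pi]; intro i; rw [hasDerivAt_pi]; intro j; exact hderiv t i j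
  let Lmat : (Fin 3 → Fin 3 → ℝ) →ₗ[ℝ] R3 :=
    { toFun := fun A => WithLp.toLp 2 ((Matrix.of A).mulVec h0)
      map_add' := fun A B => (congrArg (WithLp.toLp 2) (Matrix.add_mulVec (Matrix.of A) (Matrix.of B) h0)).trans (WithLp.toLp_add 2 _ _)
      map_smul' := fun a A => (congrArg (WithLp.toLp 2) (Matrix.smul_mulVec a (Matrix.of A) h0)).trans (WithLp.toLp_smul 2 _ _) }
  have hcurve : HasDerivAt (fun s => act3 (R s) h0) (act3 (R' t) h0) t :=
    (LinearMap.toContinuousLinearMap Lmat).hasFDerivAt.comp_hasDerivAt t hR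
  -- derivative of k ↦ R_t · h(k)
  let Tlin : (Fin 3 → ℝ) →ₗ[ℝ] R3 :=
    { toFun := fun v => WithLp.toLp 2 ((R t).mulVec v)
      map_add' := fun a b => (congrArg (WithLp.toLp 2) (Matrix.mulVec_add (R t) a b)).trans (WithLp.toLp_add 2 _ _)
      map_smul' := fun a v => (congrArg (WithLp.toLp 2) (Matrix.mulVec_smul (R t) a v)).trans (WithLp.toLp_smul 2 _ _) }
  let T := LinearMap.toContinuousLinearMap Tlin
  let L0 : R2 →L[ℝ] ℝ := EuclideanSpace.proj (0 : Fin 2)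
  let L1 : R2 →L[ℝ] ℝ := EuclideanSpace.proj (1 : Fin 2)
  have hL0 : HasFDerivAt (fun k : R2 => k 0) L0 kpt := by
    refine L0.hasFDerivAt.congr_of_eventuallyEq (Filter.Eventually.of_forall fun k => ?_)
    rfl
  have hL1 : HasFDerivAt (fun k : R2 => k 1) L1 kpt := by
    refine L1.hasFDerivAt.congr_of_eventuallyEq (Filter.Eventually.of_forall fun k => ?_)
    rfl
  have hu := (hasFDerivAt_const (k0 ^ 2) kpt).sub ((hL0.mul hL0).add (hL1.mul hL1))
  have hne : k0 ^ 2 - (kpt 0 * kpt 0 + kpt 1 * kpt 1) ≠ 0 := by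
    rw [← pow_two, ← pow_two, hkptsq]; exact ne_of_gt hrsq
  have hsqrt := ((Real.hasDerivAt_sqrt hne).comp_hasFDerivAt kpt hu).sub_const k0
  let L2 : R2 →L[ℝ] ℝ :=
    (1 / (2 * Real.sqrt (k0 ^ 2 - (kpt 0 * kpt 0 + kpt 1 * kpt 1)))) •
      (0 - ((kpt 0 • L0 + kpt 0 • L0) + (kpt 1 • L1 + kpt 1 • L1)))
  have hthird : HasFDerivAt (fun k : R2 => kappa k0 k - k0) L2 kpt := by
    refine hsqrt.congr_of_eventuallyEq (Filter.Eventually.of_forall fun k => ?_)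
    show kappa k0 k - k0 = _
    have hkk : (k 0 : ℝ) ^ 2 + k 1 ^ 2 = k 0 * k 0 + k 1 * k 1 := by ring
    rw [kappa, r2_norm_sq_aux, hkk]
    rfl
  let D : Fin 3 → (R2 →L[ℝ] ℝ) := ![L0, L1, L2]
  let Φ' : R2 →L[ℝ] (Fin 3 → ℝ) := ContinuousLinearMap.pi D
  have hvecd : HasFDerivAt
      (fun k : R2 => (![k 0, k 1, kappa k0 k - k0] : Fin 3 → ℝ)) Φ' kpt := by
    refine hasFDerivAt_pi'' fun i => ?_
    fin_cases i <;> rw [ContinuousLinearMap.proj_pi]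
    · exact hL0
    · exact hL1
    · exact hthird
  have hG : HasFDerivAt (fun k : R2 => act3 (R t) (hmap k0 k)) (T.comp Φ') kpt :=
    T.hasFDerivAt.comp kpt hvecd
  have hν : HasFDerivAt (nu k0 f (R t)) (LF.comp (T.comp Φ')) kpt :=
    by have := (hFd y0).hasFDerivAt.comp kpt hG; exact this
  -- gradient pairing
  have hgrad : ⟪gradient (nu k0 f (R t)) kpt, rot90 (φ t)⟫
      = LF (T (Φ' (rot90 (φ t)))) := by
    have h1 : gradient (nu k0 f (R t)) kpt
        = (InnerProductSpace.toDual ℝ R2).symm (fderiv ℝ (nu k0 f (R t)) kpt) := rfl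
    rw [h1, InnerProductSpace.toDual_symm_apply, hν.fderiv]
    rfl
  -- value of Φ' on rot90 (φ t)
  set w3 : Fin 3 → ℝ := ![-(φ t 1), φ t 0, 0] with hw3
  have hr0 : rot90 (φ t) 0 = -(φ t 1) := rfl
  have hr1 : rot90 (φ t) 1 = φ t 0 := rfl
  have hΦ'w : Φ' (rot90 (φ t)) = w3 := by
    funext i
    fin_cases i
    · exact hr0
    · exact hr1
    · show L2 (rot90 (φ t)) = 0
      have e0 : L0 (rot90 (φ t)) = -(φ t 1) := hr0
      have e1 : L1 (rot90 (φ t)) = φ t 0 := hr1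
      simp only [L2, ContinuousLinearMap.smul_apply, ContinuousLinearMap.sub_apply,
        ContinuousLinearMap.add_apply, ContinuousLinearMap.zero_apply,
        ContinuousLinearMap.coe_smul', Pi.smul_apply, e0, e1, smul_eq_mul,
        hkpt0, hkpt1]
      ring
  -- the cross product identity
  have hcross : cross3 (ω t) h0 = c • (WithLp.toLp 2 w3 : R3) := by
    have hω0 : ω t 0 = ρ t * φ t 0 := by rw [hcyl t]; rfl
    have hω1 : ω t 1 = ρ t * φ t 1 := by rw [hcyl t]; rfl
    have hω2 : ω t 2 = ζ t := by rw [hcyl t]; rfl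
    have hm0 : h0 0 = r * φ t 0 := hkpt0
    have hm1 : h0 1 = r * φ t 1 := hkpt1
    have hm2 : h0 2 = κr - k0 := by
      show kappa k0 kpt - k0 = κr - k0
      rw [hkappa]
    show WithLp.toLp 2 (crossProduct (ω t) h0) = c • (WithLp.toLp 2 w3 : R3)
    rw [cross_apply]
    ext j
    fin_cases j
    · show ω t 1 * h0 2 - ω t 2 * h0 1 = c * (-(φ t 1))
      rw [hω1, hω2, hm1, hm2, hc]; ring
    · show ω t 2 * h0 0 - ω t 0 * h0 2 = c * (φ t 0)
      rw [hω0, hω2, hm0, hm2, hc]; ring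
    · show ω t 0 * h0 1 - ω t 1 * h0 0 = c * 0
      rw [hω0, hω1, hm0, hm1]; ring
  -- the key identity R'_t h0 = c • R_t w3
  have hRRT : R t * (R t).transpose = 1 := mul_eq_one_comm.mp (hSO t).1
  have hkey : act3 (R' t) h0 = c • act3 (R t) (WithLp.toLp 2 w3 : R3) := by
    have h1 := hω t h0
    rw [hcross] at h1
    have h2 : (R t).mulVec ((R t).transpose.mulVec ((R' t).mulVec h0))
        = (R' t).mulVec h0 := by
      rw [Matrix.mulVec_mulVec, hRRT, Matrix.one_mulVec]
    have h3 : (R t).transpose.mulVec ((R' t).mulVec h0) = c • w3 := by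
      rw [Matrix.mulVec_mulVec]; exact congrArg WithLp.ofLp h1
    show WithLp.toLp 2 ((R' t).mulVec h0) = c • WithLp.toLp 2 ((R t).mulVec w3)
    rw [← h2, h3, Matrix.mulVec_smul, WithLp.toLp_smul]
  -- compute the time derivative
  have hLHS : deriv (fun s => nu k0 f (R s) kpt) t = LF (act3 (R' t) h0) :=
    by have := ((hFd y0).hasFDerivAt.comp_hasDerivAt t hcurve).deriv; exact this
  rw [hLHS, hkey, hgrad, hΦ'w, ContinuousLinearMap.map_smul, smul_eq_mul]
  rfl
end
end

section
/- Let k0 > 0, f : ℝ³ → ℝ be integrable with compact support, R : ℝ → SO(3) be continuously differentiable with angular velocity ω_t, and fix t ∈ ℝ. Suppose φ = (φ₁, φ₂) ∈ S¹₊ and ρ, ζ ∈ ℝ satisfy ∂_t ν_t(r·φ) = (ρ·(k0 − √(k0² − r²)) + r·ζ) · ⟨∇ν_t(r·φ), (−φ₂, φ₁)⟩ for all r ∈ (−k0, k0); suppose φ is the unique element of S¹₊ for which real numbers with this property exist; and suppose the set { r ∈ (−k0, k0) : r ≠ 0 and ⟨∇ν_t(r·φ), (−φ₂, φ₁)⟩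 ≠ 0 } has at least two elements. Then ω_t = (ρ·φ₁, ρ·φ₂, ζ). -/
noncomputable section
open Real Set MeasureTheory
open scoped RealInnerProductSpace

section Recon

lemma hasDerivAt_R3 {c : ℝ → R3} {c' : R3} {u : ℝ}
    (h : ∀ i, HasDerivAt (fun s => c s i) (c' i) u) : HasDerivAt c c' u := by
  rw [hasDerivAt_iff_hasFDerivAt, ← hasFDerivWithinAt_univ, hasFDerivWithinAt_euclidean]
  intro i
  rw [hasFDerivWithinAt_univ]
  exact (h i).hasFDerivAt.congr_fderiv (by ext; simp)

lemma grad_pair (F : R2 → ℝ) (x v : R2) : ⟪gradient F x, v⟫ = fderiv ℝ F x v :=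
  InnerProductSpace.toDual_symm_apply

lemma diffFT (f : R3 → ℝ) (hf : MeasureTheory.Integrable f) (hsupp : HasCompactSupport f) :
    Differentiable ℝ (FT f) := by
  set L : R3 →L[ℝ] R3 →L[ℝ] ℝ := (2 * π)⁻¹ • innerSL ℝ with hL
  have hg : Integrable (fun x : R3 => (f x : ℂ)) := hf.ofReal
  have hg' : Integrable (fun x : R3 => ‖x‖ * ‖(f x : ℂ)‖) := by
    simp only [Complex.norm_real]
    obtain ⟨C, hC⟩ := (hsupp.isBounded).subset_closedBall 0
    refine (Integrable.mono (hf.norm.const_mul C)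
      (continuous_norm.aestronglyMeasurable.mul hf.norm.aestronglyMeasurable) ?_)
    refine Filter.Eventually.of_forall fun x => ?_
    by_cases hx : f x = 0
    · simp [hx]
    · have hxs : x ∈ tsupport f := subset_tsupport f hx
      have hxC : ‖x‖ ≤ C := by simpa using hC hxs
      have h0 : (0:ℝ) ≤ ‖f x‖ := norm_nonneg _
      have : ‖x‖ * ‖f x‖ ≤ C * ‖f x‖ := mul_le_mul_of_nonneg_right hxC h0
      calc ‖‖x‖ * ‖f x‖‖ = ‖x‖ * ‖f x‖ := by
            rw [Real.norm_of_nonneg (by positivity)]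
        _ ≤ C * ‖f x‖ := this
        _ ≤ ‖C * ‖f x‖‖ := le_abs_self _
  have hdiff := VectorFourier.differentiable_fourierIntegral L hg hg' (μ := volume)
  have hFT : FT f = fun y =>
      (((2 * π : ℝ) ^ (-(3 : ℝ) / 2) : ℝ) : ℂ) *
        VectorFourier.fourierIntegral Real.fourierChar volume L.toLinearMap₁₂
          (fun x : R3 => (f x : ℂ)) y := by
    funext y
    rw [FT, VectorFourier.fourierIntegral]
    congr 1
    apply integral_congr_ae
    refine Filter.Eventually.of_forall fun x => ?_
    show _ = Real.fourierChar (-(L.toLinearMap₁₂ x) y) • ((f x : ℂ))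
    rw [Circle.smul_def, Real.fourierChar_apply, smul_eq_mul]
    show (f x : ℂ) * Complex.exp (-Complex.I * (⟪x, y⟫ : ℝ)) = _
    rw [mul_comm]
    congr 2
    have hπ : (π : ℝ) ≠ 0 := Real.pi_ne_zero
    have hLv : L.toLinearMap₁₂ x y = (2 * π)⁻¹ * ⟪x, y⟫ := rfl
    rw [hLv]
    have hπc : (π : ℂ) ≠ 0 := by exact_mod_cast hπ
    push_cast
    field_simp
  rw [hFT]
  exact hdiff.const_mul _

lemma diffG (f : R3 → ℝ) (hf : MeasureTheory.Integrable f) (hsupp : HasCompactSupport f) :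
    Differentiable ℝ (fun y : R3 => ‖FT f y‖ ^ 2) := by
  have h1 := diffFT f hf hsupp
  have heq : (fun y : R3 => ‖FT f y‖ ^ 2)
      = fun y => (FT f y).re * (FT f y).re + (FT f y).im * (FT f y).im := by
    funext y
    rw [Complex.sq_norm, Complex.normSq_apply]
  rw [heq]
  have hre : Differentiable ℝ (fun y : R3 => (FT f y).re) :=
    Complex.reCLM.differentiable.comp h1
  have him : Differentiable ℝ (fun y : R3 => (FT f y).im) :=
    Complex.imCLM.differentiable.comp h1
  exact (hre.mul hre).add (him.mul him)

lemma aux_polar (x y : ℝ) :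
    ∃ ρ0 α : ℝ, 0 ≤ α ∧ α < π ∧ ρ0 * Real.cos α = x ∧ ρ0 * Real.sin α = y := by
  rcases eq_or_ne y 0 with hy | hy
  · exact ⟨x, 0, le_refl 0, Real.pi_pos, by simp, by simp [hy]⟩
  · set s := Real.sqrt (x ^ 2 + y ^ 2) with hs_def
    have hy2 : 0 < y ^ 2 := by positivity
    have hs : 0 < s := Real.sqrt_pos.mpr (by nlinarith)
    have hs2 : s ^ 2 = x ^ 2 + y ^ 2 := Real.sq_sqrt (by positivity)
    have key : ∀ z : ℝ, |z| < s →
        Real.cos (Real.arccos (z / s)) = z / s ∧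
        Real.sin (Real.arccos (z / s)) = Real.sqrt (s ^ 2 - z ^ 2) / s ∧
        Real.arccos (z / s) < π ∧ 0 ≤ Real.arccos (z / s) := by
      intro z hz
      have hz1 : -1 < z / s := by
        rw [lt_div_iff₀ hs]; nlinarith [neg_abs_le z]
      have hz2 : z / s ≤ 1 := by
        rw [div_le_one hs]; nlinarith [le_abs_self z]
      refine ⟨Real.cos_arccos hz1.le hz2, ?_, ?_, Real.arccos_nonneg _⟩
      · rw [Real.sin_arccos,
          show 1 - (z / s) ^ 2 = (s ^ 2 - z ^ 2) / s ^ 2 by field_simp,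
          Real.sqrt_div (by nlinarith [abs_nonneg z, sq_abs z] : (0:ℝ) ≤ s ^ 2 - z ^ 2),
          Real.sqrt_sq hs.le]
      · refine lt_of_le_of_ne (Real.arccos_le_pi _) fun hπ => ?_
        have := Real.arccos_eq_pi.mp hπ
        linarith
    have hyy : Real.sqrt (s ^ 2 - x ^ 2) = |y| := by
      rw [show s ^ 2 - x ^ 2 = y ^ 2 by linarith, Real.sqrt_sq_eq_abs]
    have hxs : |x| < s := by
      rw [← Real.sqrt_sq_eq_abs]
      exact Real.sqrt_lt_sqrt (by positivity) (by nlinarith)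
    rcases lt_or_gt_of_ne hy with hneg | hpos
    · have hxs' : |(-x)| < s := by rwa [abs_neg]
      obtain ⟨hc, hsn, hlt, hge⟩ := key (-x) hxs'
      refine ⟨-s, Real.arccos (-x / s), hge, hlt, ?_, ?_⟩
      · rw [hc]; field_simp
      · rw [hsn, show s ^ 2 - (-x) ^ 2 = s ^ 2 - x ^ 2 by ring, hyy,
          abs_of_neg hneg]
        field_simp
    · obtain ⟨hc, hsn, hlt, hge⟩ := key x hxs
      refine ⟨s, Real.arccos (x / s), hge, hlt, ?_, ?_⟩
      · rw [hc]; field_simp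
      · rw [hsn, hyy, abs_of_pos hpos]; field_simp

lemma aux_solve {k0 r1 r2 a b : ℝ} (h1 : r1 ^ 2 < k0 ^ 2) (h2 : r2 ^ 2 < k0 ^ 2)
    (hr1 : r1 ≠ 0) (hr2 : r2 ≠ 0) (hne : r1 ≠ r2)
    (e1 : a * (k0 - Real.sqrt (k0 ^ 2 - r1 ^ 2)) + r1 * b = 0)
    (e2 : a * (k0 - Real.sqrt (k0 ^ 2 - r2 ^ 2)) + r2 * b = 0) : a = 0 ∧ b = 0 := by
  set s1 := k0 - Real.sqrt (k0 ^ 2 - r1 ^ 2) with hs1_def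
  set s2 := k0 - Real.sqrt (k0 ^ 2 - r2 ^ 2) with hs2_def
  have hq1 : Real.sqrt (k0 ^ 2 - r1 ^ 2) ^ 2 = k0 ^ 2 - r1 ^ 2 :=
    Real.sq_sqrt (by linarith)
  have hq2 : Real.sqrt (k0 ^ 2 - r2 ^ 2) ^ 2 = k0 ^ 2 - r2 ^ 2 :=
    Real.sq_sqrt (by linarith)
  have hs1 : s1 ^ 2 - 2 * k0 * s1 + r1 ^ 2 = 0 := by
    rw [hs1_def]; nlinarith [hq1]
  have hs2 : s2 ^ 2 - 2 * k0 * s2 + r2 ^ 2 = 0 := by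
    rw [hs2_def]; nlinarith [hq2]
  have big1 : r1 * (r1 * (b ^ 2 + a ^ 2) + 2 * k0 * (a * b)) = 0 := by
    linear_combination a ^ 2 * hs1 + (2 * k0 * a - a * s1 + r1 * b) * e1
  have big2 : r2 * (r2 * (b ^ 2 + a ^ 2) + 2 * k0 * (a * b)) = 0 := by
    linear_combination a ^ 2 * hs2 + (2 * k0 * a - a * s2 + r2 * b) * e2
  have q1 := (mul_eq_zero.mp big1).resolve_left hr1
  have q2 := (mul_eq_zero.mp big2).resolve_left hr2
  have hab : (r1 - r2) * (b ^ 2 + a ^ 2) = 0 := by linear_combination q1 - q2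
  have hsum : b ^ 2 + a ^ 2 = 0 :=
    (mul_eq_zero.mp hab).resolve_left (sub_ne_zero.mpr hne)
  constructor <;> nlinarith [sq_nonneg a, sq_nonneg b]


set_option maxHeartbeats 1000000 in
lemma relation_holds (k0 : ℝ) (hk0 : 0 < k0) (f : R3 → ℝ)
    (hf : MeasureTheory.Integrable f) (hsupp : HasCompactSupport f)
    (R R' : ℝ → Mat3) (hSO : ∀ t, SO3 (R t))
    (hderiv : ∀ t i j, HasDerivAt (fun s => R s i j) (R' t i j) t)
    (ω : ℝ → R3)
    (hω : ∀ t (y : R3), act3 ((R t).transpose * R' t) y = cross3 (ω t) y)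
    (t : ℝ) (φ' : R2) (hφn : φ' 0 ^ 2 + φ' 1 ^ 2 = 1) (ρ0 : ℝ)
    (h0 : (ω t) 0 = ρ0 * φ' 0) (h1 : (ω t) 1 = ρ0 * φ' 1)
    (r : ℝ) (hr : r ∈ Ioo (-k0) k0) :
    deriv (fun s => nu k0 f (R s) (r • φ')) t
      = (ρ0 * (k0 - Real.sqrt (k0 ^ 2 - r ^ 2)) + r * (ω t) 2)
          * ⟪gradient (nu k0 f (R t)) (r • φ'), rot90 φ'⟫ := by
  have hg : Differentiable ℝ (fun y : R3 => ‖FT f y‖ ^ 2) := diffG f hf hsupp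
  set g : R3 → ℝ := fun y => ‖FT f y‖ ^ 2 with hg_def
  set k : R2 := r • φ' with hk_def
  set v : R2 := rot90 φ' with hv_def
  set w : R3 := WithLp.toLp 2 (![-(φ' 1), φ' 0, 0] : Fin 3 → ℝ) with hw_def
  set c : ℝ := ρ0 * (k0 - Real.sqrt (k0 ^ 2 - r ^ 2)) + r * (ω t) 2 with hc_def
  have hr2 : r ^ 2 < k0 ^ 2 := by
    obtain ⟨ha, hb⟩ := hr
    nlinarith
  have hk0' : ∀ i, k i = r * φ' i := by
    intro i; rw [hk_def]; simp [PiLp.smul_apply, smul_eq_mul]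
  have hkn : ‖k‖ ^ 2 = r ^ 2 := by
    rw [norm_sq_R2, hk0' 0, hk0' 1]
    nlinarith [hφn]
  have hκk : kappa k0 k = Real.sqrt (k0 ^ 2 - r ^ 2) := by rw [kappa, hkn]
  -- Part A : time derivative
  have hcA : HasDerivAt (fun s => act3 (R s) (hmap k0 k)) (act3 (R' t) (hmap k0 k)) t := by
    apply hasDerivAt_R3
    intro i
    have hfun : ∀ M : Mat3, act3 M (hmap k0 k) i = ∑ j, M i j * (hmap k0 k) j :=
      fun M => rfl
    simp only [hfun]
    exact HasDerivAt.fun_sum fun j _ => (hderiv t i j).mul_const _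
  have hA : HasDerivAt (fun s => nu k0 f (R s) k)
      (fderiv ℝ g (act3 (R t) (hmap k0 k)) (act3 (R' t) (hmap k0 k))) t :=
    ((hg _).hasFDerivAt).comp_hasDerivAt t hcA
  -- Part B : rotating frame
  have hRR : R' t = R t * ((R t).transpose * R' t) := by
    have h1 : R t * (R t).transpose = 1 := mul_eq_one_comm.mp (hSO t).1
    rw [← Matrix.mul_assoc, h1, Matrix.one_mul]
  have hact : act3 (R' t) (hmap k0 k) = act3 (R t) (cross3 (ω t) (hmap k0 k)) := by
    conv_lhs => rw [hRR]
    rw [← hω t (hmap k0 k)]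
    rw [act3, act3, act3, ← Matrix.mulVec_mulVec]
  have hcross : cross3 (ω t) (hmap k0 k) = c • w := by
    ext i
    fin_cases i <;>
      simp [cross3, cross_apply, hmap, hκk, hk0', h0, h1, hw_def, hc_def,
        PiLp.smul_apply, smul_eq_mul] <;> ring
  have hmagic : act3 (R' t) (hmap k0 k) = c • act3 (R t) w := by
    rw [hact, hcross, act3, act3]; ext i; simp [Matrix.mulVec_smul]
  -- Part C : spatial derivative
  have hcomp : ∀ j : Fin 3, DifferentiableAt ℝ (fun k' : R2 => hmap k0 k' j) k := by
    intro j
    fin_cases j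
    · exact ((differentiableAt_euclidean (𝕜 := ℝ) (f := id) (y := k)).mp differentiableAt_id) 0
    · exact ((differentiableAt_euclidean (𝕜 := ℝ) (f := id) (y := k)).mp differentiableAt_id) 1
    · show DifferentiableAt ℝ (fun k' : R2 => kappa k0 k' - k0) k
      have hre : (fun k' : R2 => kappa k0 k') = fun k' : R2 => Real.sqrt (k0 ^ 2 - ⟪k', k'⟫) := by
        funext k'
        rw [kappa, real_inner_self_eq_norm_sq]
      have hin : DifferentiableAt ℝ (fun k' : R2 => k0 ^ 2 - ⟪k', k'⟫) k :=
        (differentiableAt_const _).sub (differentiableAt_id.inner ℝ differentiableAt_id)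
      have hne : k0 ^ 2 - ⟪k, k⟫ ≠ 0 := by
        rw [real_inner_self_eq_norm_sq, hkn]; intro h; nlinarith
      have : DifferentiableAt ℝ (fun k' : R2 => kappa k0 k') k := by
        rw [hre]
        exact hin.sqrt hne
      exact this.sub_const k0
  have hm : DifferentiableAt ℝ (fun k' : R2 => act3 (R t) (hmap k0 k')) k := by
    rw [differentiableAt_euclidean]
    intro i
    have hfun : (fun k' : R2 => act3 (R t) (hmap k0 k') i)
        = fun k' => ∑ j, R t i j * (hmap k0 k') j := rfl
    rw [hfun]
    exact DifferentiableAt.fun_sum fun j _ => (hcomp j).const_mul _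
  have c2 : DifferentiableAt ℝ (nu k0 f (R t)) k := DifferentiableAt.comp k (hg _) hm
  have hline : HasDerivAt (fun u : ℝ => k + u • v) v 0 := by
    simpa using ((hasDerivAt_id (0 : ℝ)).smul_const v).const_add k
  have h00 : k + (0 : ℝ) • v = k := by simp
  have hcurve2 : HasDerivAt (fun u : ℝ => nu k0 f (R t) (k + u • v))
      (fderiv ℝ (nu k0 f (R t)) k v) 0 := by
    have hFk : HasFDerivAt (nu k0 f (R t)) (fderiv ℝ (nu k0 f (R t)) k)
        (k + (0 : ℝ) • v) := by
      rw [h00]; exact c2.hasFDerivAt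
    exact hFk.comp_hasDerivAt 0 hline
  have hknorm2 : ∀ u : ℝ, ‖k + u • v‖ ^ 2 = k0 ^ 2 - (k0 ^ 2 - (r ^ 2 + u * u)) := by
    intro u
    have hv0 : (k + u • v) 0 = r * φ' 0 + u * (-(φ' 1)) := by
      simp [hk_def, hv_def, rot90, PiLp.add_apply, PiLp.smul_apply, smul_eq_mul]
    have hv1 : (k + u • v) 1 = r * φ' 1 + u * φ' 0 := by
      simp [hk_def, hv_def, rot90, PiLp.add_apply, PiLp.smul_apply, smul_eq_mul]
    rw [norm_sq_R2, hv0, hv1]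
    nlinarith [hφn]
  have hm1 : HasDerivAt (fun u : ℝ => act3 (R t) (hmap k0 (k + u • v))) (act3 (R t) w) 0 := by
    apply hasDerivAt_R3
    intro i
    have hfun : (fun u : ℝ => act3 (R t) (hmap k0 (k + u • v)) i)
        = fun u => ∑ j, R t i j * hmap k0 (k + u • v) j := rfl
    have hw : act3 (R t) w i = ∑ j, R t i j * w j := rfl
    rw [hfun, hw]
    refine HasDerivAt.fun_sum fun j _ => HasDerivAt.const_mul _ ?_
    fin_cases j
    · show HasDerivAt (fun u : ℝ => (k + u • v) 0) (-(φ' 1)) 0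
      have hfj : (fun u : ℝ => (k + u • v) 0) = fun u => r * φ' 0 + u * (-(φ' 1)) := by
        funext u
        simp [hk_def, hv_def, rot90, PiLp.add_apply, PiLp.smul_apply, smul_eq_mul]
      rw [hfj]
      simpa using ((hasDerivAt_id (0 : ℝ)).mul_const (-(φ' 1))).const_add (r * φ' 0)
    · show HasDerivAt (fun u : ℝ => (k + u • v) 1) (φ' 0) 0
      have hfj : (fun u : ℝ => (k + u • v) 1) = fun u => r * φ' 1 + u * φ' 0 := by
        funext u
        simp [hk_def, hv_def, rot90, PiLp.add_apply, PiLp.smul_apply, smul_eq_mul]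
      rw [hfj]
      simpa using ((hasDerivAt_id (0 : ℝ)).mul_const (φ' 0)).const_add (r * φ' 1)
    · show HasDerivAt (fun u : ℝ => kappa k0 (k + u • v) - k0) (0 : ℝ) 0
      have hfj : (fun u : ℝ => kappa k0 (k + u • v) - k0)
          = fun u => Real.sqrt (k0 ^ 2 - (r ^ 2 + u * u)) - k0 := by
        funext u
        rw [kappa]
        congr 2
        have := hknorm2 u
        linarith
      rw [hfj]
      have hid := hasDerivAt_id (0 : ℝ)
      have hsq : HasDerivAt (fun u : ℝ => u * u) (0 : ℝ) 0 := by simpa [sq] using hasDerivAt_pow 2 (0 : ℝ)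
      have hin : HasDerivAt (fun u : ℝ => k0 ^ 2 - (r ^ 2 + u * u)) (0 : ℝ) 0 := by
        simpa using (hsq.const_add (r ^ 2)).const_sub (k0 ^ 2)
      have hne0 : k0 ^ 2 - (r ^ 2 + 0 * 0) ≠ 0 := by intro h; nlinarith
      have hout := (Real.hasDerivAt_sqrt hne0).comp 0 hin
      simpa using hout.sub_const k0
  have hcurve : HasDerivAt (fun u : ℝ => nu k0 f (R t) (k + u • v))
      (fderiv ℝ g (act3 (R t) (hmap k0 k)) (act3 (R t) w)) 0 := by
    have hX : act3 (R t) (hmap k0 (k + (0 : ℝ) • v)) = act3 (R t) (hmap k0 k) := by rw [h00]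
    have hgX : HasFDerivAt g (fderiv ℝ g (act3 (R t) (hmap k0 k)))
        (act3 (R t) (hmap k0 (k + (0 : ℝ) • v))) := by
      rw [hX]; exact (hg _).hasFDerivAt
    exact hgX.comp_hasDerivAt 0 hm1
  have key : fderiv ℝ (nu k0 f (R t)) k v
      = fderiv ℝ g (act3 (R t) (hmap k0 k)) (act3 (R t) w) := hcurve2.unique hcurve
  calc deriv (fun s => nu k0 f (R s) k) t
      = fderiv ℝ g (act3 (R t) (hmap k0 k)) (act3 (R' t) (hmap k0 k)) := hA.deriv
    _ = fderiv ℝ g (act3 (R t) (hmap k0 k)) (c • act3 (R t) w) := by rw [hmagic]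
    _ = c * fderiv ℝ g (act3 (R t) (hmap k0 k)) (act3 (R t) w) := by
        rw [ContinuousLinearMap.map_smul, smul_eq_mul]
    _ = c * fderiv ℝ (nu k0 f (R t)) k v := by rw [key]
    _ = c * ⟪gradient (nu k0 f (R t)) k, v⟫ := by rw [grad_pair]
end Recon
/-- Theorem: reconstruction of the angular velocity `ω_t`.
If `φ ∈ S¹₊` is the unique direction for which parameters `ρ, ζ` with the infinitesimal
common circle relation exist, and the set
`{ r ∈ (−k0, k0) : r ≠ 0, ⟨∇ν_t(r φ), (−φ₂, φ₁)⟩ ≠ 0 }` has at least two elements,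
then `ω_t = (ρ φ₁, ρ φ₂, ζ)`. -/
theorem reconstruction_angular_velocity (k0 : ℝ) (hk0 : 0 < k0) (f : R3 → ℝ)
    (hf : MeasureTheory.Integrable f) (hsupp : HasCompactSupport f)
    (R R' : ℝ → Mat3) (hSO : ∀ t, SO3 (R t))
    (hderiv : ∀ t i j, HasDerivAt (fun s => R s i j) (R' t i j) t)
    (hcont : ∀ i j, Continuous fun t => R' t i j)
    (ω : ℝ → R3)
    (hω : ∀ t (y : R3), act3 ((R t).transpose * R' t) y = cross3 (ω t) y)
    (t : ℝ) (φ : R2) (hφ : φ ∈ S1plus) (ρ ζ : ℝ)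
    (heq : ∀ r ∈ Ioo (-k0) k0,
      deriv (fun s => nu k0 f (R s) (r • φ)) t
        = (ρ * (k0 - Real.sqrt (k0 ^ 2 - r ^ 2)) + r * ζ)
            * ⟪gradient (nu k0 f (R t)) (r • φ), rot90 φ⟫)
    (huniq : ∀ φ' ∈ S1plus,
      (∃ ρ' ζ' : ℝ, ∀ r ∈ Ioo (-k0) k0,
        deriv (fun s => nu k0 f (R s) (r • φ')) t
          = (ρ' * (k0 - Real.sqrt (k0 ^ 2 - r ^ 2)) + r * ζ')
              * ⟪gradient (nu k0 f (R t)) (r • φ'), rot90 φ'⟫) → φ' = φ)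
    (hset : Set.Nontrivial
      {r : ℝ | r ∈ Ioo (-k0) k0 ∧ r ≠ 0 ∧
        ⟪gradient (nu k0 f (R t)) (r • φ), rot90 φ⟫ ≠ 0}) :
    ω t = (![ρ * φ 0, ρ * φ 1, ζ] : Fin 3 → ℝ) := by
  obtain ⟨ρ0, α0, hα0a, hα0b, hx, hy⟩ := aux_polar ((ω t) 0) ((ω t) 1)
  set φ0 : R2 := WithLp.toLp 2 (![Real.cos α0, Real.sin α0] : Fin 2 → ℝ) with hφ0_def
  have hφ0mem : φ0 ∈ S1plus := ⟨α0, hα0a, hα0b, rfl⟩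
  have hφ0n : φ0 0 ^ 2 + φ0 1 ^ 2 = 1 := by
    show Real.cos α0 ^ 2 + Real.sin α0 ^ 2 = 1
    exact Real.cos_sq_add_sin_sq α0
  have h0' : (ω t) 0 = ρ0 * φ0 0 := by
    show (ω t) 0 = ρ0 * Real.cos α0
    exact hx.symm
  have h1' : (ω t) 1 = ρ0 * φ0 1 := by
    show (ω t) 1 = ρ0 * Real.sin α0
    exact hy.symm
  have hrel0 : ∀ r ∈ Ioo (-k0) k0,
      deriv (fun s => nu k0 f (R s) (r • φ0)) t
        = (ρ0 * (k0 - Real.sqrt (k0 ^ 2 - r ^ 2)) + r * (ω t) 2)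
            * ⟪gradient (nu k0 f (R t)) (r • φ0), rot90 φ0⟫ :=
    fun r hr => relation_holds k0 hk0 f hf hsupp R R' hSO hderiv ω hω t φ0 hφ0n ρ0 h0' h1' r hr
  have hφ0φ : φ0 = φ := huniq φ0 hφ0mem ⟨ρ0, (ω t) 2, hrel0⟩
  rw [hφ0φ] at hrel0 h0' h1'
  obtain ⟨r1, hr1, r2, hr2, hrne⟩ := hset
  obtain ⟨hr1I, hr1z, hr1P⟩ := hr1
  obtain ⟨hr2I, hr2z, hr2P⟩ := hr2
  have hEq : ∀ r ∈ Ioo (-k0) k0, ⟪gradient (nu k0 f (R t)) (r • φ), rot90 φ⟫ ≠ 0 →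
      (ρ - ρ0) * (k0 - Real.sqrt (k0 ^ 2 - r ^ 2)) + r * (ζ - (ω t) 2) = 0 := by
    intro r hrI hP
    have e1 := heq r hrI
    have e2 := hrel0 r hrI
    have e3 := e1.symm.trans e2
    have hfac : ρ * (k0 - Real.sqrt (k0 ^ 2 - r ^ 2)) + r * ζ
        = ρ0 * (k0 - Real.sqrt (k0 ^ 2 - r ^ 2)) + r * (ω t) 2 :=
      mul_right_cancel₀ hP e3
    linear_combination hfac
  have hsq1 : r1 ^ 2 < k0 ^ 2 := by
    obtain ⟨a, b⟩ := hr1I; nlinarith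
  have hsq2 : r2 ^ 2 < k0 ^ 2 := by
    obtain ⟨a, b⟩ := hr2I; nlinarith
  obtain ⟨ha, hb⟩ := aux_solve hsq1 hsq2 hr1z hr2z hrne
    (hEq r1 hr1I hr1P) (hEq r2 hr2I hr2P)
  have hρ : ρ = ρ0 := by linarith
  have hζ : ζ = (ω t) 2 := by linarith
  funext i
  fin_cases i
  · show (ω t) 0 = ρ * φ 0
    rw [hρ]; exact h0'
  · show (ω t) 1 = ρ * φ 1
    rw [hρ]; exact h1'
  · show (ω t) 2 = ζ
    rw [hζ]
end
end

section
/- Let k0 > 0, f : ℝ³ → ℝ be integrable, R_s, R_t ∈ SO(3) with R_s·e3 ≠ R_t·e3 and R_s·e3 ≠ −R_t·e3, and d_s, d_t ∈ ℝ³. Then: (i) for every β ∈ J_{s,t} with μ_s(γ_{s,t}(β)) ≠ 0, one has e^{i⟨R_t·d_t − R_s·d_s, σ_{s,t}(β)⟩} = μ_s(γ_{s,t}(β)) / μ_t(γ_{t,s}(−β)); (ii) for every β ∈ J*_{s,t} with μ_s(γ*_{s,t}(β)) ≠ 0, one has e^{i⟨R_t·d_t − R_s·d_s, σ*_{s,t}(β)⟩}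 = μ_s(γ*_{s,t}(β)) / conj(μ_t(γ*_{t,s}(β))). Here γ_{t,s} and γ*_{t,s} denote the corresponding arcs with the roles of s and t swapped. -/
noncomputable section
open Real Set MeasureTheory
open scoped RealInnerProductSpace

def aStar (k0 : ℝ) (Rs Rt : Mat3) : ℝ := k0 / 2 * ‖rotE3 Rs - rotE3 Rt‖

def sigmaStar (k0 : ℝ) (Rs Rt : Mat3) (β : ℝ) : R3 :=
  (aStar k0 Rs Rt * (Real.cos β - 1)) • v3 Rs Rt - (aStar k0 Rs Rt * Real.sin β) • v2 Rs Rt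

def JstarSet (Rs Rt : Mat3) : Set ℝ :=
  if 0 ≤ cST Rs Rt then Ioc (-π) π
  else Ioo (-(Real.arccos ((cST Rs Rt + 1) / (cST Rs Rt - 1))))
    (Real.arccos ((cST Rs Rt + 1) / (cST Rs Rt - 1)))

def gammaStar (k0 : ℝ) (Rs Rt : Mat3) (β : ℝ) : R2 :=
  (-(aTilde k0 Rs Rt * (Real.cos β - 1))) • w1 Rs Rt
    - (aStar k0 Rs Rt * Real.sin β) • w2 Rs Rt

def gammaStarEuler (k0 φ θ β : ℝ) : R2 :=
  (-(k0 / 2 * Real.sin θ * (Real.cos β - 1))) • WithLp.toLp 2 (![Real.cos φ, Real.sin φ] : Fin 2 → ℝ)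
    - (k0 * Real.sin (θ / 2) * Real.sin β) • WithLp.toLp 2 (![-Real.sin φ, Real.cos φ] : Fin 2 → ℝ)

/-- The scaled measurement data `μ(k) = 𝓕f(R·h(k))·e^{−i⟨d, h(k)⟩}` for a rotation `R` and a
translation `d`. -/
def muData (k0 : ℝ) (f : R3 → ℝ) (R : Mat3) (d : R3) (k : R2) : ℂ :=
  FT f (act3 R (hmap k0 k)) * Complex.exp (-Complex.I * (⟪d, hmap k0 k⟫ : ℝ))

-- ===== auxiliary lemmas =====

lemma SO3.mul_transpose {R : Mat3} (h : SO3 R) : R * R.transpose = 1 :=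
  mul_eq_one_comm.mp h.1

lemma SO3.transposeSO3 {R : Mat3} (h : SO3 R) : SO3 R.transpose :=
  ⟨by rw [Matrix.transpose_transpose]; exact h.mul_transpose,
   by rw [Matrix.det_transpose]; exact h.2⟩

lemma SO3.mulSO3 {R S : Mat3} (hR : SO3 R) (hS : SO3 S) : SO3 (R * S) := by
  constructor
  · rw [Matrix.transpose_mul, Matrix.mul_assoc, ← Matrix.mul_assoc R.transpose, hR.1,
      Matrix.one_mul, hS.1]
  · rw [Matrix.det_mul, hR.2, hS.2, one_mul]

lemma act3_act3 (R S : Mat3) (x : R3) : act3 R (act3 S x) = act3 (R * S) x := by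
  simp [act3, Matrix.mulVec_mulVec]

lemma act3_one (x : R3) : act3 1 x = x := by
  simp [act3]

lemma act3_transpose_act3 {R : Mat3} (h : SO3 R) (x : R3) :
    act3 R.transpose (act3 R x) = x := by
  rw [act3_act3, h.1, act3_one]

lemma act3_act3_transpose {R : Mat3} (h : SO3 R) (x : R3) :
    act3 R (act3 R.transpose x) = x := by
  rw [act3_act3, h.mul_transpose, act3_one]

lemma inner_eq_dot (x y : R3) : ⟪x, y⟫ = dotProduct (x : Fin 3 → ℝ) y := by
  simp [PiLp.inner_apply, dotProduct, RCLike.inner_apply, mul_comm]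

lemma inner_act3_left (R : Mat3) (x y : R3) :
    ⟪act3 R x, y⟫ = ⟪x, act3 R.transpose y⟫ := by
  simp only [inner_eq_dot, act3, WithLp.ofLp_toLp]
  rw [dotProduct_comm, Matrix.dotProduct_mulVec, dotProduct_comm]
  congr 1
  rw [← Matrix.vecMul_transpose, Matrix.transpose_transpose]

lemma act3_inner {R : Mat3} (h : SO3 R) (x y : R3) :
    ⟪act3 R x, act3 R y⟫ = ⟪x, y⟫ := by
  rw [inner_act3_left, act3_transpose_act3 h]

lemma act3_norm {R : Mat3} (h : SO3 R) (x : R3) : ‖act3 R x‖ = ‖x‖ := by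
  have := act3_inner h x x
  rw [real_inner_self_eq_norm_sq, real_inner_self_eq_norm_sq] at this
  nlinarith [norm_nonneg (act3 R x), norm_nonneg x]

lemma act3_add (R : Mat3) (x y : R3) : act3 R (x + y) = act3 R x + act3 R y := by
  ext i
  simp [act3, Matrix.mulVec, dotProduct, PiLp.add_apply, mul_add, Finset.sum_add_distrib]

lemma act3_sub (R : Mat3) (x y : R3) : act3 R (x - y) = act3 R x - act3 R y := by
  ext i
  simp [act3, Matrix.mulVec, dotProduct, PiLp.sub_apply, mul_sub, Finset.sum_sub_distrib]

lemma act3_smul (R : Mat3) (c : ℝ) (x : R3) : act3 R (c • x) = c • act3 R x := by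
  ext i
  simp [act3, Matrix.mulVec, dotProduct, PiLp.smul_apply, Finset.mul_sum, smul_eq_mul]
  congr 1; funext j; ring

lemma act3_neg (R : Mat3) (x : R3) : act3 R (-x) = -act3 R x := by
  ext i
  simp [act3, Matrix.mulVec, dotProduct, PiLp.neg_apply]

lemma cross_act3 {R : Mat3} (h : SO3 R) (x y : R3) :
    act3 R (cross3 x y) = cross3 (act3 R x) (act3 R y) := by
  have hdot : ∀ a b : Fin 3 → ℝ, dotProduct (R.mulVec a) (R.mulVec b)
      = dotProduct a b := by
    intro a b
    have := act3_inner h (WithLp.toLp 2 a : R3) (WithLp.toLp 2 b : R3)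
    simpa [inner_eq_dot, act3] using this
  have hmat : ∀ z : Fin 3 → ℝ,
      (Matrix.of ![R.mulVec z, R.mulVec x, R.mulVec y] : Mat3)
        = (Matrix.of ![(z : Fin 3 → ℝ), x, y] : Mat3) * R.transpose := by
    intro z
    ext i j
    fin_cases i <;>
      simp [Matrix.mul_apply, Matrix.mulVec, dotProduct, mul_comm]
  have key : ∀ w : Fin 3 → ℝ,
      dotProduct (R.mulVec (crossProduct x y)) w
        = dotProduct (crossProduct (R.mulVec x) (R.mulVec y)) w := by
    intro w
    have hw : R.mulVec (R.transpose.mulVec w) = w := by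
      rw [Matrix.mulVec_mulVec, h.mul_transpose, Matrix.one_mulVec]
    set z := R.transpose.mulVec w with hz
    rw [← hw]
    rw [hdot]
    rw [dotProduct_comm (crossProduct x y) z,
      triple_product_eq_det z x y]
    rw [dotProduct_comm _ (R.mulVec z),
      triple_product_eq_det]
    have h2 : Matrix.det (Matrix.of ![R.mulVec z, R.mulVec x, R.mulVec y])
        = Matrix.det ((Matrix.of ![(z : Fin 3 → ℝ), x, y] : Mat3) * R.transpose) :=
      congrArg Matrix.det (hmat z)
    have h3 : Matrix.det (Matrix.of ![R.mulVec z, R.mulVec x, R.mulVec y])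
        = Matrix.det (Matrix.of ![(z : Fin 3 → ℝ), x, y]) := by
      rw [h2, Matrix.det_mul, Matrix.det_transpose, h.2, mul_one]
    exact h3.symm
  ext i
  have := key (Pi.single i 1)
  simpa [dotProduct_single, act3, cross3] using this

-- ===== basic norm computations =====

lemma norm3_eq (x : R3) : ‖x‖ = Real.sqrt ((x 0) ^ 2 + (x 1) ^ 2 + (x 2) ^ 2) := by
  rw [EuclideanSpace.norm_eq]
  congr 1
  simp [Fin.sum_univ_three, Real.norm_eq_abs, sq_abs]

lemma norm2_eq (x : R2) : ‖x‖ = Real.sqrt ((x 0) ^ 2 + (x 1) ^ 2) := by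
  rw [EuclideanSpace.norm_eq]
  congr 1
  simp [Fin.sum_univ_two, Real.norm_eq_abs, sq_abs]

lemma norm2_sq (x : R2) : ‖x‖ ^ 2 = (x 0) ^ 2 + (x 1) ^ 2 := by
  rw [norm2_eq, Real.sq_sqrt (by positivity)]

lemma norm_e3 : ‖e3‖ = 1 := by
  rw [norm3_eq]; norm_num [e3, Matrix.cons_val_two]
-- ===== facts about the relative axis u =====

lemma rotE3_act3 (R : Mat3) : rotE3 R = act3 R e3 := rfl

lemma rotE3_eq_act3_relAxis {Rs : Mat3} (Rt : Mat3) (hRs : SO3 Rs) :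
    rotE3 Rt = act3 Rs (relAxis Rs Rt) := by
  rw [relAxis, rotE3_act3, act3_act3, ← Matrix.mul_assoc, hRs.mul_transpose, Matrix.one_mul]

lemma relAxisSO3 {Rs Rt : Mat3} (hRs : SO3 Rs) (hRt : SO3 Rt) :
    relAxis Rs Rt = act3 (Rs.transpose * Rt) e3 := rfl

lemma cST_eq_u2 {Rs Rt : Mat3} (hRs : SO3 Rs) : cST Rs Rt = relAxis Rs Rt 2 := by
  rw [cST, rotE3_eq_act3_relAxis Rt hRs, rotE3_act3, act3_inner hRs, inner_eq_dot]
  simp [e3, dotProduct, Fin.sum_univ_three]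

lemma relAxis_unit {Rs Rt : Mat3} (hRs : SO3 Rs) (hRt : SO3 Rt) :
    (relAxis Rs Rt 0) ^ 2 + (relAxis Rs Rt 1) ^ 2 = 1 - (relAxis Rs Rt 2) ^ 2 := by
  have h := act3_inner (SO3.mulSO3 (SO3.transposeSO3 hRs) hRt) e3 e3
  rw [relAxisSO3 hRs hRt] at *
  rw [inner_eq_dot, inner_eq_dot] at h
  set u := act3 (Rs.transpose * Rt) e3
  simp [dotProduct, Fin.sum_univ_three, e3] at h
  nlinarith [h]

lemma rotE3_norm {R : Mat3} (h : SO3 R) : ‖rotE3 R‖ = 1 := by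
  rw [rotE3_act3, act3_norm h, norm_e3]

lemma cST_lt_one {Rs Rt : Mat3} (hRs : SO3 Rs) (hRt : SO3 Rt)
    (hne : rotE3 Rs ≠ rotE3 Rt) : cST Rs Rt < 1 := by
  have h2 : 0 < ‖rotE3 Rs - rotE3 Rt‖ := norm_pos_iff.mpr (sub_ne_zero.mpr hne)
  have h3 : ‖rotE3 Rs - rotE3 Rt‖ ^ 2
      = ‖rotE3 Rs‖ ^ 2 - 2 * ⟪rotE3 Rs, rotE3 Rt⟫ + ‖rotE3 Rt‖ ^ 2 :=
    norm_sub_sq_real _ _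
  rw [rotE3_norm hRs, rotE3_norm hRt] at h3
  rw [cST]
  nlinarith [h2, h3]

lemma neg_one_lt_cST {Rs Rt : Mat3} (hRs : SO3 Rs) (hRt : SO3 Rt)
    (hne' : rotE3 Rs ≠ -rotE3 Rt) : -1 < cST Rs Rt := by
  have hadd : rotE3 Rs + rotE3 Rt ≠ 0 := by
    intro h; exact hne' (by rw [← add_eq_zero_iff_eq_neg]; exact h)
  have h2 : 0 < ‖rotE3 Rs + rotE3 Rt‖ := norm_pos_iff.mpr hadd
  have h3 : ‖rotE3 Rs + rotE3 Rt‖ ^ 2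
      = ‖rotE3 Rs‖ ^ 2 + 2 * ⟪rotE3 Rs, rotE3 Rt⟫ + ‖rotE3 Rt‖ ^ 2 :=
    norm_add_sq_real _ _
  rw [rotE3_norm hRs, rotE3_norm hRt] at h3
  rw [cST]
  nlinarith [h2, h3]

lemma norm_add_rotE3_sq {Rs Rt : Mat3} (hRs : SO3 Rs) (hRt : SO3 Rt) :
    ‖rotE3 Rs + rotE3 Rt‖ ^ 2 = 2 + 2 * cST Rs Rt := by
  have h3 : ‖rotE3 Rs + rotE3 Rt‖ ^ 2
      = ‖rotE3 Rs‖ ^ 2 + 2 * ⟪rotE3 Rs, rotE3 Rt⟫ + ‖rotE3 Rt‖ ^ 2 :=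
    norm_add_sq_real _ _
  rw [rotE3_norm hRs, rotE3_norm hRt] at h3
  rw [h3, cST]; ring

lemma norm_sub_rotE3_sq {Rs Rt : Mat3} (hRs : SO3 Rs) (hRt : SO3 Rt) :
    ‖rotE3 Rs - rotE3 Rt‖ ^ 2 = 2 - 2 * cST Rs Rt := by
  have h3 : ‖rotE3 Rs - rotE3 Rt‖ ^ 2
      = ‖rotE3 Rs‖ ^ 2 - 2 * ⟪rotE3 Rs, rotE3 Rt⟫ + ‖rotE3 Rt‖ ^ 2 :=
    norm_sub_sq_real _ _
  rw [rotE3_norm hRs, rotE3_norm hRt] at h3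
  rw [h3, cST]; ring

lemma cross_e3_eq (u : R3) : cross3 e3 u = WithLp.toLp 2 (![-(u 1), u 0, 0] : Fin 3 → ℝ) := by
  ext i
  fin_cases i <;> simp [cross3, cross_apply, e3]
-- ===== main geometric lemma (non-star) =====

set_option maxHeartbeats 1000000 in
lemma geom_main (k0 : ℝ) (hk0 : 0 < k0) (Rs Rt : Mat3) (hRs : SO3 Rs) (hRt : SO3 Rt)
    (hne : rotE3 Rs ≠ rotE3 Rt) (hne' : rotE3 Rs ≠ -rotE3 Rt) (β : ℝ)
    (hZ : 0 ≤ 1 + (Real.cos β - 1) * (1 + cST Rs Rt) / 2) :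
    act3 Rs (hmap k0 (gammaArc k0 Rs Rt β)) = sigmaArc k0 Rs Rt β := by
  have hc2 : relAxis Rs Rt 2 = cST Rs Rt := (cST_eq_u2 hRs).symm
  have huu : (relAxis Rs Rt 0) ^ 2 + (relAxis Rs Rt 1) ^ 2 = 1 - (cST Rs Rt) ^ 2 := by
    rw [← hc2]; exact relAxis_unit hRs hRt
  have hc1 : cST Rs Rt < 1 := cST_lt_one hRs hRt hne
  have hcm : -1 < cST Rs Rt := neg_one_lt_cST hRs hRt hne'
  have hp2 : Real.sqrt ((relAxis Rs Rt 0) ^ 2 + (relAxis Rs Rt 1) ^ 2) ^ 2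
      = 1 - (cST Rs Rt) ^ 2 := by
    rw [Real.sq_sqrt (by positivity)]; exact huu
  have hppos : 0 < Real.sqrt ((relAxis Rs Rt 0) ^ 2 + (relAxis Rs Rt 1) ^ 2) := by
    apply Real.sqrt_pos.mpr; nlinarith
  have hnp2 : ‖rotE3 Rs + rotE3 Rt‖ ^ 2 = 2 + 2 * cST Rs Rt := norm_add_rotE3_sq hRs hRt
  have hnppos : 0 < ‖rotE3 Rs + rotE3 Rt‖ := by
    nlinarith [norm_nonneg (rotE3 Rs + rotE3 Rt)]
  have ha : aRad k0 Rs Rt = k0 / 2 * ‖rotE3 Rs + rotE3 Rt‖ := rfl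
  have ha2 : (aRad k0 Rs Rt) ^ 2 = k0 ^ 2 * (2 + 2 * cST Rs Rt) / 4 := by
    calc (aRad k0 Rs Rt) ^ 2 = (k0 / 2) ^ 2 * ‖rotE3 Rs + rotE3 Rt‖ ^ 2 := by rw [ha]; ring
      _ = k0 ^ 2 * (2 + 2 * cST Rs Rt) / 4 := by rw [hnp2]; ring
  have hcru : cross3 e3 (relAxis Rs Rt)
      = WithLp.toLp 2 (![-(relAxis Rs Rt 1), relAxis Rs Rt 0, 0] : Fin 3 → ℝ) := cross_e3_eq _
  have hP2u : ‖P2 (relAxis Rs Rt)‖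
      = Real.sqrt ((relAxis Rs Rt 0) ^ 2 + (relAxis Rs Rt 1) ^ 2) := by
    rw [norm2_eq]; simp [P2]
  have hP2c : ‖P2 (cross3 e3 (relAxis Rs Rt))‖
      = Real.sqrt ((relAxis Rs Rt 0) ^ 2 + (relAxis Rs Rt 1) ^ 2) := by
    rw [norm2_eq, hcru]; simp [P2]; congr 1; ring
  -- gamma coordinates
  have hγ0 : gammaArc k0 Rs Rt β 0
      = k0 / 2 * (Real.cos β - 1) * relAxis Rs Rt 0
        - (aRad k0 Rs Rt * Real.sin β
            / Real.sqrt ((relAxis Rs Rt 0) ^ 2 + (relAxis Rs Rt 1) ^ 2)) * relAxis Rs Rt 1 := by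
    rw [gammaArc]
    simp only [w1, w2, aTilde]
    rw [hP2u, hP2c, hcru]
    simp [PiLp.add_apply, PiLp.smul_apply, smul_eq_mul, P2]
    field_simp
    ring
  have hγ1 : gammaArc k0 Rs Rt β 1
      = k0 / 2 * (Real.cos β - 1) * relAxis Rs Rt 1
        + (aRad k0 Rs Rt * Real.sin β
            / Real.sqrt ((relAxis Rs Rt 0) ^ 2 + (relAxis Rs Rt 1) ^ 2)) * relAxis Rs Rt 0 := by
    rw [gammaArc]
    simp only [w1, w2, aTilde]
    rw [hP2u, hP2c, hcru]
    simp [PiLp.add_apply, PiLp.smul_apply, smul_eq_mul, P2]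
    field_simp
  have hqp : (aRad k0 Rs Rt * Real.sin β
        / Real.sqrt ((relAxis Rs Rt 0) ^ 2 + (relAxis Rs Rt 1) ^ 2))
      * Real.sqrt ((relAxis Rs Rt 0) ^ 2 + (relAxis Rs Rt 1) ^ 2)
      = aRad k0 Rs Rt * Real.sin β := by
    field_simp
  have hs : Real.sin β ^ 2 = 1 - Real.cos β ^ 2 := by
    nlinarith [Real.sin_sq_add_cos_sq β]
  have hq2 : (aRad k0 Rs Rt * Real.sin β
        / Real.sqrt ((relAxis Rs Rt 0) ^ 2 + (relAxis Rs Rt 1) ^ 2)) ^ 2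
        * ((relAxis Rs Rt 0) ^ 2 + (relAxis Rs Rt 1) ^ 2)
      = k0 ^ 2 * (2 + 2 * cST Rs Rt) / 4 * (1 - Real.cos β ^ 2) := by
    calc (aRad k0 Rs Rt * Real.sin β
        / Real.sqrt ((relAxis Rs Rt 0) ^ 2 + (relAxis Rs Rt 1) ^ 2)) ^ 2
        * ((relAxis Rs Rt 0) ^ 2 + (relAxis Rs Rt 1) ^ 2)
        = (aRad k0 Rs Rt * Real.sin β
            / Real.sqrt ((relAxis Rs Rt 0) ^ 2 + (relAxis Rs Rt 1) ^ 2)) ^ 2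
          * (Real.sqrt ((relAxis Rs Rt 0) ^ 2 + (relAxis Rs Rt 1) ^ 2)) ^ 2 := by
          rw [Real.sq_sqrt (by positivity)]
      _ = ((aRad k0 Rs Rt * Real.sin β
            / Real.sqrt ((relAxis Rs Rt 0) ^ 2 + (relAxis Rs Rt 1) ^ 2))
          * Real.sqrt ((relAxis Rs Rt 0) ^ 2 + (relAxis Rs Rt 1) ^ 2)) ^ 2 := by ring
      _ = (aRad k0 Rs Rt * Real.sin β) ^ 2 := by rw [hqp]
      _ = (aRad k0 Rs Rt) ^ 2 * Real.sin β ^ 2 := by ring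
      _ = k0 ^ 2 * (2 + 2 * cST Rs Rt) / 4 * (1 - Real.cos β ^ 2) := by rw [ha2, hs]
  have hng : k0 ^ 2 - ‖gammaArc k0 Rs Rt β‖ ^ 2
      = (k0 * (1 + (Real.cos β - 1) * (1 + cST Rs Rt) / 2)) ^ 2 := by
    rw [norm2_sq, hγ0, hγ1]
    linear_combination (-(k0 / 2 * (Real.cos β - 1)) ^ 2) * huu + (-1 : ℝ) * hq2
  have hZ' : 0 ≤ k0 * (1 + (Real.cos β - 1) * (1 + cST Rs Rt) / 2) :=
    mul_nonneg hk0.le hZ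
  have hκ : kappa k0 (gammaArc k0 Rs Rt β)
      = k0 * (1 + (Real.cos β - 1) * (1 + cST Rs Rt) / 2) := by
    rw [kappa, hng, Real.sqrt_sq hZ']
  -- sigma side
  have he : act3 Rs.transpose (rotE3 Rs) = e3 := by
    rw [rotE3_act3]; exact act3_transpose_act3 hRs e3
  have ht : act3 Rs.transpose (rotE3 Rt) = relAxis Rs Rt := by
    rw [rotE3_eq_act3_relAxis Rt hRs]; exact act3_transpose_act3 hRs _
  have hv1 : act3 Rs.transpose (v1 Rs Rt)
      = ‖rotE3 Rs + rotE3 Rt‖⁻¹ • ((e3 : R3) + relAxis Rs Rt) := by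
    rw [v1, act3_smul, act3_add, he, ht]
  have hcrosseq : cross3 (rotE3 Rs) (rotE3 Rt) = act3 Rs (cross3 e3 (relAxis Rs Rt)) := by
    rw [rotE3_eq_act3_relAxis Rt hRs, rotE3_act3, ← cross_act3 hRs]
  have hncross : ‖cross3 (rotE3 Rs) (rotE3 Rt)‖
      = Real.sqrt ((relAxis Rs Rt 0) ^ 2 + (relAxis Rs Rt 1) ^ 2) := by
    rw [hcrosseq, act3_norm hRs, hcru, norm3_eq]
    simp
    congr 1
    ring
  have hv2 : act3 Rs.transpose (v2 Rs Rt)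
      = (Real.sqrt ((relAxis Rs Rt 0) ^ 2 + (relAxis Rs Rt 1) ^ 2))⁻¹
          • cross3 e3 (relAxis Rs Rt) := by
    rw [v2, act3_smul, hncross, hcrosseq, act3_transpose_act3 hRs]
  have hσ : act3 Rs.transpose (sigmaArc k0 Rs Rt β)
      = (aRad k0 Rs Rt * (Real.cos β - 1))
          • (‖rotE3 Rs + rotE3 Rt‖⁻¹ • ((e3 : R3) + relAxis Rs Rt))
        + (aRad k0 Rs Rt * Real.sin β)
          • ((Real.sqrt ((relAxis Rs Rt 0) ^ 2 + (relAxis Rs Rt 1) ^ 2))⁻¹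
              • cross3 e3 (relAxis Rs Rt)) := by
    rw [sigmaArc, act3_add, act3_smul, act3_smul, hv1, hv2]
  have hfin : hmap k0 (gammaArc k0 Rs Rt β) = act3 Rs.transpose (sigmaArc k0 Rs Rt β) := by
    rw [hσ]
    ext i
    fin_cases i
    · simp only [hmap, PiLp.add_apply, PiLp.smul_apply, smul_eq_mul, hcru]
      simp [e3]
      rw [hγ0, ha]
      field_simp
      ring
    · simp only [hmap, PiLp.add_apply, PiLp.smul_apply, smul_eq_mul, hcru]
      simp [e3]
      rw [hγ1, ha]
      field_simp
    · simp only [hmap, PiLp.add_apply, PiLp.smul_apply, smul_eq_mul, hcru]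
      simp [e3]
      rw [hκ, hc2, ha]
      field_simp
      ring
  calc act3 Rs (hmap k0 (gammaArc k0 Rs Rt β))
      = act3 Rs (act3 Rs.transpose (sigmaArc k0 Rs Rt β)) := by rw [hfin]
    _ = sigmaArc k0 Rs Rt β := act3_act3_transpose hRs _
-- ===== main geometric lemma (star) =====

set_option maxHeartbeats 1000000 in
lemma geom_star (k0 : ℝ) (hk0 : 0 < k0) (Rs Rt : Mat3) (hRs : SO3 Rs) (hRt : SO3 Rt)
    (hne : rotE3 Rs ≠ rotE3 Rt) (hne' : rotE3 Rs ≠ -rotE3 Rt) (β : ℝ)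
    (hZ : 0 ≤ 1 + (Real.cos β - 1) * (1 - cST Rs Rt) / 2) :
    act3 Rs (hmap k0 (gammaStar k0 Rs Rt β)) = sigmaStar k0 Rs Rt β := by
  have hc2 : relAxis Rs Rt 2 = cST Rs Rt := (cST_eq_u2 hRs).symm
  have huu : (relAxis Rs Rt 0) ^ 2 + (relAxis Rs Rt 1) ^ 2 = 1 - (cST Rs Rt) ^ 2 := by
    rw [← hc2]; exact relAxis_unit hRs hRt
  have hc1 : cST Rs Rt < 1 := cST_lt_one hRs hRt hne
  have hcm : -1 < cST Rs Rt := neg_one_lt_cST hRs hRt hne'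
  have hp2 : Real.sqrt ((relAxis Rs Rt 0) ^ 2 + (relAxis Rs Rt 1) ^ 2) ^ 2
      = 1 - (cST Rs Rt) ^ 2 := by
    rw [Real.sq_sqrt (by positivity)]; exact huu
  have hppos : 0 < Real.sqrt ((relAxis Rs Rt 0) ^ 2 + (relAxis Rs Rt 1) ^ 2) := by
    apply Real.sqrt_pos.mpr; nlinarith
  have hnm2 : ‖rotE3 Rs - rotE3 Rt‖ ^ 2 = 2 - 2 * cST Rs Rt := norm_sub_rotE3_sq hRs hRt
  have hnmpos : 0 < ‖rotE3 Rs - rotE3 Rt‖ := by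
    nlinarith [norm_nonneg (rotE3 Rs - rotE3 Rt)]
  have ha : aStar k0 Rs Rt = k0 / 2 * ‖rotE3 Rs - rotE3 Rt‖ := rfl
  have ha2 : (aStar k0 Rs Rt) ^ 2 = k0 ^ 2 * (2 - 2 * cST Rs Rt) / 4 := by
    calc (aStar k0 Rs Rt) ^ 2 = (k0 / 2) ^ 2 * ‖rotE3 Rs - rotE3 Rt‖ ^ 2 := by rw [ha]; ring
      _ = k0 ^ 2 * (2 - 2 * cST Rs Rt) / 4 := by rw [hnm2]; ring
  have hcru : cross3 e3 (relAxis Rs Rt)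
      = WithLp.toLp 2 (![-(relAxis Rs Rt 1), relAxis Rs Rt 0, 0] : Fin 3 → ℝ) := cross_e3_eq _
  have hP2u : ‖P2 (relAxis Rs Rt)‖
      = Real.sqrt ((relAxis Rs Rt 0) ^ 2 + (relAxis Rs Rt 1) ^ 2) := by
    rw [norm2_eq]; simp [P2]
  have hP2c : ‖P2 (cross3 e3 (relAxis Rs Rt))‖
      = Real.sqrt ((relAxis Rs Rt 0) ^ 2 + (relAxis Rs Rt 1) ^ 2) := by
    rw [norm2_eq, hcru]; simp [P2]; congr 1; ring
  have hγ0 : gammaStar k0 Rs Rt β 0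
      = -(k0 / 2 * (Real.cos β - 1) * relAxis Rs Rt 0)
        + (aStar k0 Rs Rt * Real.sin β
            / Real.sqrt ((relAxis Rs Rt 0) ^ 2 + (relAxis Rs Rt 1) ^ 2)) * relAxis Rs Rt 1 := by
    rw [gammaStar]
    simp only [w1, w2, aTilde]
    rw [hP2u, hP2c, hcru]
    simp [PiLp.sub_apply, PiLp.smul_apply, smul_eq_mul, P2]
    field_simp
  have hγ1 : gammaStar k0 Rs Rt β 1
      = -(k0 / 2 * (Real.cos β - 1) * relAxis Rs Rt 1)
        - (aStar k0 Rs Rt * Real.sin β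
            / Real.sqrt ((relAxis Rs Rt 0) ^ 2 + (relAxis Rs Rt 1) ^ 2)) * relAxis Rs Rt 0 := by
    rw [gammaStar]
    simp only [w1, w2, aTilde]
    rw [hP2u, hP2c, hcru]
    simp [PiLp.sub_apply, PiLp.smul_apply, smul_eq_mul, P2]
    field_simp
  have hqp : (aStar k0 Rs Rt * Real.sin β
        / Real.sqrt ((relAxis Rs Rt 0) ^ 2 + (relAxis Rs Rt 1) ^ 2))
      * Real.sqrt ((relAxis Rs Rt 0) ^ 2 + (relAxis Rs Rt 1) ^ 2)
      = aStar k0 Rs Rt * Real.sin β := by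
    field_simp
  have hs : Real.sin β ^ 2 = 1 - Real.cos β ^ 2 := by
    nlinarith [Real.sin_sq_add_cos_sq β]
  have hq2 : (aStar k0 Rs Rt * Real.sin β
        / Real.sqrt ((relAxis Rs Rt 0) ^ 2 + (relAxis Rs Rt 1) ^ 2)) ^ 2
        * ((relAxis Rs Rt 0) ^ 2 + (relAxis Rs Rt 1) ^ 2)
      = k0 ^ 2 * (2 - 2 * cST Rs Rt) / 4 * (1 - Real.cos β ^ 2) := by
    calc (aStar k0 Rs Rt * Real.sin β
        / Real.sqrt ((relAxis Rs Rt 0) ^ 2 + (relAxis Rs Rt 1) ^ 2)) ^ 2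
        * ((relAxis Rs Rt 0) ^ 2 + (relAxis Rs Rt 1) ^ 2)
        = (aStar k0 Rs Rt * Real.sin β
            / Real.sqrt ((relAxis Rs Rt 0) ^ 2 + (relAxis Rs Rt 1) ^ 2)) ^ 2
          * (Real.sqrt ((relAxis Rs Rt 0) ^ 2 + (relAxis Rs Rt 1) ^ 2)) ^ 2 := by
          rw [Real.sq_sqrt (by positivity)]
      _ = ((aStar k0 Rs Rt * Real.sin β
            / Real.sqrt ((relAxis Rs Rt 0) ^ 2 + (relAxis Rs Rt 1) ^ 2))
          * Real.sqrt ((relAxis Rs Rt 0) ^ 2 + (relAxis Rs Rt 1) ^ 2)) ^ 2 := by ring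
      _ = (aStar k0 Rs Rt * Real.sin β) ^ 2 := by rw [hqp]
      _ = (aStar k0 Rs Rt) ^ 2 * Real.sin β ^ 2 := by ring
      _ = k0 ^ 2 * (2 - 2 * cST Rs Rt) / 4 * (1 - Real.cos β ^ 2) := by rw [ha2, hs]
  have hng : k0 ^ 2 - ‖gammaStar k0 Rs Rt β‖ ^ 2
      = (k0 * (1 + (Real.cos β - 1) * (1 - cST Rs Rt) / 2)) ^ 2 := by
    rw [norm2_sq, hγ0, hγ1]
    linear_combination (-(k0 / 2 * (Real.cos β - 1)) ^ 2) * huu + (-1 : ℝ) * hq2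
  have hZ' : 0 ≤ k0 * (1 + (Real.cos β - 1) * (1 - cST Rs Rt) / 2) :=
    mul_nonneg hk0.le hZ
  have hκ : kappa k0 (gammaStar k0 Rs Rt β)
      = k0 * (1 + (Real.cos β - 1) * (1 - cST Rs Rt) / 2) := by
    rw [kappa, hng, Real.sqrt_sq hZ']
  have he : act3 Rs.transpose (rotE3 Rs) = e3 := by
    rw [rotE3_act3]; exact act3_transpose_act3 hRs e3
  have ht : act3 Rs.transpose (rotE3 Rt) = relAxis Rs Rt := by
    rw [rotE3_eq_act3_relAxis Rt hRs]; exact act3_transpose_act3 hRs _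
  have hv3 : act3 Rs.transpose (v3 Rs Rt)
      = ‖rotE3 Rs - rotE3 Rt‖⁻¹ • ((e3 : R3) - relAxis Rs Rt) := by
    rw [v3, act3_smul, act3_sub, he, ht]
  have hcrosseq : cross3 (rotE3 Rs) (rotE3 Rt) = act3 Rs (cross3 e3 (relAxis Rs Rt)) := by
    rw [rotE3_eq_act3_relAxis Rt hRs, rotE3_act3, ← cross_act3 hRs]
  have hncross : ‖cross3 (rotE3 Rs) (rotE3 Rt)‖
      = Real.sqrt ((relAxis Rs Rt 0) ^ 2 + (relAxis Rs Rt 1) ^ 2) := by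
    rw [hcrosseq, act3_norm hRs, hcru, norm3_eq]
    simp
    congr 1
    ring
  have hv2 : act3 Rs.transpose (v2 Rs Rt)
      = (Real.sqrt ((relAxis Rs Rt 0) ^ 2 + (relAxis Rs Rt 1) ^ 2))⁻¹
          • cross3 e3 (relAxis Rs Rt) := by
    rw [v2, act3_smul, hncross, hcrosseq, act3_transpose_act3 hRs]
  have hσ : act3 Rs.transpose (sigmaStar k0 Rs Rt β)
      = (aStar k0 Rs Rt * (Real.cos β - 1))
          • (‖rotE3 Rs - rotE3 Rt‖⁻¹ • ((e3 : R3) - relAxis Rs Rt))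
        - (aStar k0 Rs Rt * Real.sin β)
          • ((Real.sqrt ((relAxis Rs Rt 0) ^ 2 + (relAxis Rs Rt 1) ^ 2))⁻¹
              • cross3 e3 (relAxis Rs Rt)) := by
    rw [sigmaStar, act3_sub, act3_smul, act3_smul, hv3, hv2]
  have hfin : hmap k0 (gammaStar k0 Rs Rt β) = act3 Rs.transpose (sigmaStar k0 Rs Rt β) := by
    rw [hσ]
    ext i
    fin_cases i
    · simp only [hmap, PiLp.sub_apply, PiLp.smul_apply, smul_eq_mul, hcru]
      simp [e3]
      rw [hγ0, ha]
      field_simp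
    · simp only [hmap, PiLp.sub_apply, PiLp.smul_apply, smul_eq_mul, hcru]
      simp [e3]
      rw [hγ1, ha]
      field_simp
    · simp only [hmap, PiLp.sub_apply, PiLp.smul_apply, smul_eq_mul, hcru]
      simp [e3]
      rw [hκ, hc2, ha]
      field_simp
      ring
  calc act3 Rs (hmap k0 (gammaStar k0 Rs Rt β))
      = act3 Rs (act3 Rs.transpose (sigmaStar k0 Rs Rt β)) := by rw [hfin]
    _ = sigmaStar k0 Rs Rt β := act3_act3_transpose hRs _
-- ===== symmetry lemmas =====

lemma cST_symm (Rs Rt : Mat3) : cST Rt Rs = cST Rs Rt := real_inner_comm _ _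

lemma cross3_symm (x y : R3) : cross3 y x = -cross3 x y := by
  ext i
  fin_cases i <;> simp [cross3, cross_apply, PiLp.neg_apply] <;> ring

lemma v2_symm (Rs Rt : Mat3) : v2 Rt Rs = -v2 Rs Rt := by
  rw [v2, v2, cross3_symm, norm_neg, smul_neg]

lemma sigmaArc_symm (k0 : ℝ) (Rs Rt : Mat3) (β : ℝ) :
    sigmaArc k0 Rt Rs (-β) = sigmaArc k0 Rs Rt β := by
  have h1 : v1 Rt Rs = v1 Rs Rt := by rw [v1, v1, add_comm]
  have ha : aRad k0 Rt Rs = aRad k0 Rs Rt := by rw [aRad, aRad, add_comm]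
  rw [sigmaArc, sigmaArc, Real.cos_neg, Real.sin_neg, h1, ha, v2_symm,
    mul_neg, neg_smul, smul_neg, neg_neg]

lemma sigmaStar_symm (k0 : ℝ) (Rs Rt : Mat3) (β : ℝ) :
    sigmaStar k0 Rt Rs β = -sigmaStar k0 Rs Rt β := by
  have h3 : v3 Rt Rs = -v3 Rs Rt := by
    rw [v3, v3, show rotE3 Rt - rotE3 Rs = -(rotE3 Rs - rotE3 Rt) from (neg_sub _ _).symm,
      norm_neg, smul_neg]
  have ha : aStar k0 Rt Rs = aStar k0 Rs Rt := by rw [aStar, aStar, norm_sub_rev]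
  rw [sigmaStar, sigmaStar, h3, ha, v2_symm, smul_neg, smul_neg]
  abel

-- ===== J set conditions =====

lemma Jset_cos {Rs Rt : Mat3} (hcm : -1 < cST Rs Rt) (hc1 : cST Rs Rt < 1) {β : ℝ}
    (hβ : β ∈ Jset Rs Rt) :
    0 ≤ 1 + (Real.cos β - 1) * (1 + cST Rs Rt) / 2 := by
  rw [Jset] at hβ
  split_ifs at hβ with hc
  · nlinarith [Real.neg_one_le_cos β]
  · push_neg at hc
    have hden : 0 < cST Rs Rt + 1 := by linarith
    have hx1 : -1 ≤ (cST Rs Rt - 1) / (cST Rs Rt + 1) := by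
      rw [le_div_iff₀ hden]; linarith
    have hx2 : (cST Rs Rt - 1) / (cST Rs Rt + 1) ≤ 1 := by
      have : (cST Rs Rt - 1) / (cST Rs Rt + 1) < 0 :=
        div_neg_of_neg_of_pos (by linarith) hden
      linarith
    have hβ0 : |β| < Real.arccos ((cST Rs Rt - 1) / (cST Rs Rt + 1)) :=
      abs_lt.mpr ⟨hβ.1, hβ.2⟩
    have hcosβ : (cST Rs Rt - 1) / (cST Rs Rt + 1) < Real.cos β := by
      calc (cST Rs Rt - 1) / (cST Rs Rt + 1)
          = Real.cos (Real.arccos ((cST Rs Rt - 1) / (cST Rs Rt + 1))) :=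
            (Real.cos_arccos hx1 hx2).symm
        _ < Real.cos |β| :=
            Real.cos_lt_cos_of_nonneg_of_le_pi (abs_nonneg β) (Real.arccos_le_pi _) hβ0
        _ = Real.cos β := Real.cos_abs β
    have hkey : ((cST Rs Rt - 1) / (cST Rs Rt + 1) - 1) * (1 + cST Rs Rt) = -2 := by
      field_simp
      ring
    nlinarith [mul_nonneg (sub_pos.mpr hcosβ).le hden.le]

lemma Jstar_cos {Rs Rt : Mat3} (hcm : -1 < cST Rs Rt) (hc1 : cST Rs Rt < 1) {β : ℝ}
    (hβ : β ∈ JstarSet Rs Rt) :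
    0 ≤ 1 + (Real.cos β - 1) * (1 - cST Rs Rt) / 2 := by
  rw [JstarSet] at hβ
  split_ifs at hβ with hc
  · nlinarith [Real.neg_one_le_cos β]
  · push_neg at hc
    have hden : cST Rs Rt - 1 < 0 := by linarith
    have hx1 : -1 ≤ (cST Rs Rt + 1) / (cST Rs Rt - 1) := by
      rw [le_div_iff_of_neg hden]; linarith
    have hx2 : (cST Rs Rt + 1) / (cST Rs Rt - 1) ≤ 1 := by
      have : (cST Rs Rt + 1) / (cST Rs Rt - 1) < 0 :=
        div_neg_of_pos_of_neg (by linarith) hden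
      linarith
    have hβ0 : |β| < Real.arccos ((cST Rs Rt + 1) / (cST Rs Rt - 1)) :=
      abs_lt.mpr ⟨hβ.1, hβ.2⟩
    have hcosβ : (cST Rs Rt + 1) / (cST Rs Rt - 1) < Real.cos β := by
      calc (cST Rs Rt + 1) / (cST Rs Rt - 1)
          = Real.cos (Real.arccos ((cST Rs Rt + 1) / (cST Rs Rt - 1))) :=
            (Real.cos_arccos hx1 hx2).symm
        _ < Real.cos |β| :=
            Real.cos_lt_cos_of_nonneg_of_le_pi (abs_nonneg β) (Real.arccos_le_pi _) hβ0
        _ = Real.cos β := Real.cos_abs β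
    have hkey : ((cST Rs Rt + 1) / (cST Rs Rt - 1) - 1) * (1 - cST Rs Rt) = -2 := by
      rw [div_sub_one hden.ne, div_mul_eq_mul_div, div_eq_iff hden.ne]
      ring
    nlinarith [mul_nonneg (sub_pos.mpr hcosβ).le (by linarith : (0:ℝ) ≤ 1 - cST Rs Rt)]

-- ===== Fourier transform conjugation =====

lemma FT_conj (f : R3 → ℝ) (y : R3) : (starRingEnd ℂ) (FT f y) = FT f (-y) := by
  rw [FT, FT, map_mul, Complex.conj_ofReal]
  congr 1
  rw [← integral_conj]
  congr 1
  funext x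
  rw [map_mul, Complex.conj_ofReal, ← Complex.exp_conj]
  congr 1
  simp only [map_mul, Complex.conj_I, map_neg, Complex.conj_ofReal, inner_neg_right]
  push_cast
  ring

/-- Lemma: complex phase shift along the common circles.
(i) For `β ∈ J_{s,t}` with `μ_s(γ_{s,t}(β)) ≠ 0`,
`e^{i⟨R_t d_t − R_s d_s, σ_{s,t}(β)⟩} = μ_s(γ_{s,t}(β)) / μ_t(γ_{t,s}(−β))`.
(ii) For `β ∈ J*_{s,t}` with `μ_s(γ*_{s,t}(β)) ≠ 0`,
`e^{i⟨R_t d_t − R_s d_s, σ*_{s,t}(β)⟩} = μ_s(γ*_{s,t}(β)) / conj(μ_t(γ*_{t,s}(β)))`. -/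
theorem phase_shift_common_circles (k0 : ℝ) (hk0 : 0 < k0) (f : R3 → ℝ)
    (hf : MeasureTheory.Integrable f) (Rs Rt : Mat3) (hRs : SO3 Rs) (hRt : SO3 Rt)
    (hne : rotE3 Rs ≠ rotE3 Rt) (hne' : rotE3 Rs ≠ -rotE3 Rt) (ds dt : R3) :
    (∀ β ∈ Jset Rs Rt, muData k0 f Rs ds (gammaArc k0 Rs Rt β) ≠ 0 →
      Complex.exp (Complex.I * (⟪act3 Rt dt - act3 Rs ds, sigmaArc k0 Rs Rt β⟫ : ℝ))
        = muData k0 f Rs ds (gammaArc k0 Rs Rt β)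
            / muData k0 f Rt dt (gammaArc k0 Rt Rs (-β))) ∧
    (∀ β ∈ JstarSet Rs Rt, muData k0 f Rs ds (gammaStar k0 Rs Rt β) ≠ 0 →
      Complex.exp (Complex.I * (⟪act3 Rt dt - act3 Rs ds, sigmaStar k0 Rs Rt β⟫ : ℝ))
        = muData k0 f Rs ds (gammaStar k0 Rs Rt β)
            / (starRingEnd ℂ) (muData k0 f Rt dt (gammaStar k0 Rt Rs β))) := by
  have hc1 : cST Rs Rt < 1 := cST_lt_one hRs hRt hne
  have hcm : -1 < cST Rs Rt := neg_one_lt_cST hRs hRt hne'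
  have hne2 : rotE3 Rt ≠ rotE3 Rs := fun h => hne h.symm
  have hne2' : rotE3 Rt ≠ -rotE3 Rs := by
    intro h; exact hne' (by rw [h, neg_neg])
  constructor
  · -- part (i)
    intro β hβ hμs
    have hZ : 0 ≤ 1 + (Real.cos β - 1) * (1 + cST Rs Rt) / 2 := Jset_cos hcm hc1 hβ
    have hG1 : act3 Rs (hmap k0 (gammaArc k0 Rs Rt β)) = sigmaArc k0 Rs Rt β :=
      geom_main k0 hk0 Rs Rt hRs hRt hne hne' β hZ
    have hZ2 : 0 ≤ 1 + (Real.cos (-β) - 1) * (1 + cST Rt Rs) / 2 := by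
      rw [Real.cos_neg, cST_symm]; exact hZ
    have hG2 : act3 Rt (hmap k0 (gammaArc k0 Rt Rs (-β))) = sigmaArc k0 Rs Rt β := by
      rw [geom_main k0 hk0 Rt Rs hRt hRs hne2 hne2' (-β) hZ2, sigmaArc_symm]
    have hps : (⟪ds, hmap k0 (gammaArc k0 Rs Rt β)⟫ : ℝ)
        = ⟪act3 Rs ds, sigmaArc k0 Rs Rt β⟫ := by
      rw [← hG1, act3_inner hRs]
    have hpt : (⟪dt, hmap k0 (gammaArc k0 Rt Rs (-β))⟫ : ℝ)
        = ⟪act3 Rt dt, sigmaArc k0 Rs Rt β⟫ := by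
      rw [← hG2, act3_inner hRt]
    have hFT : FT f (act3 Rt (hmap k0 (gammaArc k0 Rt Rs (-β))))
        = FT f (act3 Rs (hmap k0 (gammaArc k0 Rs Rt β))) := by rw [hG1, hG2]
    have hFT0 : FT f (act3 Rs (hmap k0 (gammaArc k0 Rs Rt β))) ≠ 0 := by
      intro h
      exact hμs (by rw [muData, h, zero_mul])
    rw [muData, muData, hps, hpt, hFT, mul_div_mul_left _ _ hFT0]
    rw [eq_div_iff (Complex.exp_ne_zero _), ← Complex.exp_add]
    congr 1
    rw [inner_sub_left]
    push_cast
    ring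
  · -- part (ii)
    intro β hβ hμs
    have hZ : 0 ≤ 1 + (Real.cos β - 1) * (1 - cST Rs Rt) / 2 := Jstar_cos hcm hc1 hβ
    have hG1 : act3 Rs (hmap k0 (gammaStar k0 Rs Rt β)) = sigmaStar k0 Rs Rt β :=
      geom_star k0 hk0 Rs Rt hRs hRt hne hne' β hZ
    have hZ2 : 0 ≤ 1 + (Real.cos β - 1) * (1 - cST Rt Rs) / 2 := by
      rw [cST_symm]; exact hZ
    have hG2 : act3 Rt (hmap k0 (gammaStar k0 Rt Rs β)) = -sigmaStar k0 Rs Rt β := by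
      rw [geom_star k0 hk0 Rt Rs hRt hRs hne2 hne2' β hZ2, sigmaStar_symm]
    have hps : (⟪ds, hmap k0 (gammaStar k0 Rs Rt β)⟫ : ℝ)
        = ⟪act3 Rs ds, sigmaStar k0 Rs Rt β⟫ := by
      rw [← hG1, act3_inner hRs]
    have hpt : (⟪dt, hmap k0 (gammaStar k0 Rt Rs β)⟫ : ℝ)
        = -⟪act3 Rt dt, sigmaStar k0 Rs Rt β⟫ := by
      rw [← inner_neg_right, ← hG2, act3_inner hRt]
    have hFT0 : FT f (act3 Rs (hmap k0 (gammaStar k0 Rs Rt β))) ≠ 0 := by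
      intro h
      exact hμs (by rw [muData, h, zero_mul])
    have hconj : (starRingEnd ℂ) (muData k0 f Rt dt (gammaStar k0 Rt Rs β))
        = FT f (act3 Rs (hmap k0 (gammaStar k0 Rs Rt β)))
          * Complex.exp (-Complex.I * ((⟪act3 Rt dt, sigmaStar k0 Rs Rt β⟫ : ℝ) : ℂ)) := by
      rw [muData, map_mul, FT_conj]
      congr 1
      · rw [hG2, neg_neg, hG1]
      · rw [← Complex.exp_conj]
        congr 1
        rw [hpt]
        simp only [map_mul, map_neg, Complex.conj_I, Complex.conj_ofReal]
        push_cast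
        ring
    rw [muData, hps, hconj, mul_div_mul_left _ _ hFT0]
    rw [eq_div_iff (Complex.exp_ne_zero _), ← Complex.exp_add]
    congr 1
    rw [inner_sub_left]
    push_cast
    ring
end
end
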